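/- arXiv:1601.05839 — 16 statements merged into one kernel-verified Lean document; each statement's English description precedes it below -/
import Mathlib

section
/- Let α ∈ (0,1), κ = α^{1/(1-α)}, and let C_M, C_S, C_U > 0 and N_m, N_f > 0. Then the mixed-service equilibrium system — K_U, K_M, K_S > 0; C_M/K_M = C_S/K_S = R where R = (C_M + C_S)/(K_M + K_S); u(R) − R·u'(R) = u(C_U/K_U); and K_U + K_M + K_S = N_m + N_f — has the unique solution K_U = (N_f+N_m)·C_U/(C_U + κ(C_M+C_S)), K_M = (N_f+N_m)·κC_M/(C_U + κ(C_M+C_S)), K_S = (N_f+N_m)·κC_S/(C_U + κ(C_M+C_S)). -/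
open Real

/-- the mixed-service equilibrium system has the unique solution
`K_U = (N_f+N_m)·C_U/(C_U + κ(C_M+C_S))`, `K_M = (N_f+N_m)·κC_M/(C_U + κ(C_M+C_S))`,
`K_S = (N_f+N_m)·κC_S/(C_U + κ(C_M+C_S))`. -/
theorem stmt2 (α κ C_M C_S C_U N_m N_f : ℝ) (hα0 : 0 < α) (hα1 : α < 1)
    (hκ : κ = α ^ (1 / (1 - α)))
    (hCM : 0 < C_M) (hCS : 0 < C_S) (hCU : 0 < C_U) (hNm : 0 < N_m) (hNf : 0 < N_f)
    (K_U K_M K_S : ℝ) :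
    (0 < K_U ∧ 0 < K_M ∧ 0 < K_S ∧
      C_M / K_M = (C_M + C_S) / (K_M + K_S) ∧
      C_S / K_S = (C_M + C_S) / (K_M + K_S) ∧
      ((C_M + C_S) / (K_M + K_S)) ^ (1 - α) / (1 - α)
          - ((C_M + C_S) / (K_M + K_S)) * ((C_M + C_S) / (K_M + K_S)) ^ (-α)
        = (C_U / K_U) ^ (1 - α) / (1 - α) ∧
      K_U + K_M + K_S = N_m + N_f)
    ↔ (K_U = (N_f + N_m) * C_U / (C_U + κ * (C_M + C_S)) ∧
       K_M = (N_f + N_m) * (κ * C_M) / (C_U + κ * (C_M + C_S)) ∧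
       K_S = (N_f + N_m) * (κ * C_S) / (C_U + κ * (C_M + C_S))) := by
  have h1α : (0:ℝ) < 1 - α := by linarith
  have h1α' : (1:ℝ) - α ≠ 0 := ne_of_gt h1α
  have hκpos : 0 < κ := by rw [hκ]; exact Real.rpow_pos_of_pos hα0 _
  have hκ1α : κ ^ (1 - α) = α := by
    rw [hκ, ← Real.rpow_mul hα0.le, one_div, inv_mul_cancel₀ h1α', Real.rpow_one]
  have key : ∀ R : ℝ, 0 < R →
      R ^ (1-α) / (1-α) - R * R ^ (-α) = (κ*R)^(1-α)/(1-α) := by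
    intro R hR
    have h1 : R * R ^ (-α) = R ^ (1-α) := by
      calc R * R ^ (-α) = R ^ (1:ℝ) * R ^ (-α) := by rw [Real.rpow_one]
        _ = R ^ (1 + -α) := (Real.rpow_add hR 1 (-α)).symm
        _ = R ^ (1 - α) := by ring_nf
    have h2 : (κ*R)^(1-α) = α * R^(1-α) := by
      rw [Real.mul_rpow hκpos.le hR.le, hκ1α]
    rw [h1, h2]
    field_simp
    ring
  have hD : 0 < C_U + κ * (C_M + C_S) := by positivity
  constructor
  · rintro ⟨hKU, hKM, hKS, e1, e2, e3, e4⟩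
    have hS : 0 < K_M + K_S := by linarith
    set R := (C_M + C_S) / (K_M + K_S) with hRdef
    have hRpos : 0 < R := div_pos (by linarith) hS
    have hb : K_M * R = C_M := by
      field_simp [hKM.ne'] at e1
      linear_combination -e1
    have hc : K_S * R = C_S := by
      field_simp [hKS.ne'] at e2
      linear_combination -e2
    have heq : (κ*R)^(1-α) = (C_U/K_U)^(1-α) := by
      have := (key R hRpos).symm.trans e3
      field_simp at this
      exact this
    have ha : K_U * (κ * R) = C_U := by
      have h := congrArg (· ^ (1-α)⁻¹) heq
      rw [Real.rpow_rpow_inv (by positivity) h1α',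
        Real.rpow_rpow_inv (by positivity) h1α'] at h
      field_simp [hKU.ne'] at h ⊢
      linarith
    have hκRN : κ * R * (N_m + N_f) = C_U + κ * (C_M + C_S) := by
      linear_combination ha + κ*hb + κ*hc - κ*R*e4
    refine ⟨?_, ?_, ?_⟩
    · rw [eq_div_iff hD.ne']
      linear_combination (N_f+N_m)*ha - K_U*hκRN
    · rw [eq_div_iff hD.ne']
      linear_combination (N_f+N_m)*κ*hb - K_M*hκRN
    · rw [eq_div_iff hD.ne']
      linear_combination (N_f+N_m)*κ*hc - K_S*hκRN
  · rintro ⟨rfl, rfl, rfl⟩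
    have hKU : 0 < (N_f + N_m) * C_U / (C_U + κ * (C_M + C_S)) := by positivity
    have hKM : 0 < (N_f + N_m) * (κ * C_M) / (C_U + κ * (C_M + C_S)) := by positivity
    have hKS : 0 < (N_f + N_m) * (κ * C_S) / (C_U + κ * (C_M + C_S)) := by positivity
    have hS : 0 < (N_f + N_m) * (κ * C_M) / (C_U + κ * (C_M + C_S))
        + (N_f + N_m) * (κ * C_S) / (C_U + κ * (C_M + C_S)) := by positivity
    refine ⟨hKU, hKM, hKS, ?_, ?_, ?_, ?_⟩
    · rw [div_eq_div_iff hKM.ne' hS.ne']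
      field_simp
    · rw [div_eq_div_iff hKS.ne' hS.ne']
      field_simp
    · have hR : (C_M + C_S) / ((N_f + N_m) * (κ * C_M) / (C_U + κ * (C_M + C_S))
          + (N_f + N_m) * (κ * C_S) / (C_U + κ * (C_M + C_S)))
          = (C_U + κ * (C_M + C_S)) / (κ * (N_f + N_m)) := by
        rw [div_eq_div_iff hS.ne' (by positivity : (0:ℝ) < κ * (N_f + N_m)).ne']
        field_simp
      have hCUKU : C_U / ((N_f + N_m) * C_U / (C_U + κ * (C_M + C_S)))
          = κ * ((C_U + κ * (C_M + C_S)) / (κ * (N_f + N_m))) := by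
        rw [div_eq_iff hKU.ne']
        field_simp
      rw [hR, hCUKU]
      exact key _ (by positivity)
    · field_simp
      ring
end

section
/- Let α ∈ (0,1), κ = α^{1/(1-α)}, and let C_S, C_U > 0 and N_f > 0. Then the separate-service equilibrium system — K_S, K_U > 0; u(C_S/K_S) − (C_S/K_S)·u'(C_S/K_S) = u(C_U/K_U); K_S + K_U = N_f — has the unique solution K_S = N_f·κC_S/(κC_S + C_U) and K_U = N_f·C_U/(κC_S + C_U). -/
open Real

/-- the separate-service equilibrium system has the unique solution
`K_S = N_f·κC_S/(κC_S + C_U)` and `K_U = N_f·C_U/(κC_S + C_U)`. -/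
theorem stmt3 (α κ C_S C_U N_f : ℝ) (hα0 : 0 < α) (hα1 : α < 1)
    (hκ : κ = α ^ (1 / (1 - α)))
    (hCS : 0 < C_S) (hCU : 0 < C_U) (hNf : 0 < N_f)
    (K_S K_U : ℝ) :
    (0 < K_S ∧ 0 < K_U ∧
      (C_S / K_S) ^ (1 - α) / (1 - α) - (C_S / K_S) * (C_S / K_S) ^ (-α)
        = (C_U / K_U) ^ (1 - α) / (1 - α) ∧
      K_S + K_U = N_f)
    ↔ (K_S = N_f * (κ * C_S) / (κ * C_S + C_U) ∧
       K_U = N_f * C_U / (κ * C_S + C_U)) := by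
  have h1α : 0 < 1 - α := by linarith
  have h1α' : (1 : ℝ) - α ≠ 0 := h1α.ne'
  have hκpos : 0 < κ := hκ ▸ Real.rpow_pos_of_pos hα0 _
  have hκα : κ ^ (1 - α) = α := by
    rw [hκ, ← Real.rpow_mul hα0.le, one_div, inv_mul_cancel₀ h1α', Real.rpow_one]
  have hden : 0 < κ * C_S + C_U := by positivity
  constructor
  · rintro ⟨hKS, hKU, heq, hsum⟩
    have hx : 0 < C_S / K_S := div_pos hCS hKS
    have hy : 0 < C_U / K_U := div_pos hCU hKU
    set x := C_S / K_S with hxd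
    set y := C_U / K_U with hyd
    have hxx : x ^ (1 - α) = x * x ^ (-α) := by
      rw [show (1:ℝ) - α = 1 + (-α) by ring, Real.rpow_add hx, Real.rpow_one]
    rw [← hxx] at heq
    have hkey : y ^ (1 - α) = α * x ^ (1 - α) := by
      field_simp at heq
      linarith
    have hyx : y = κ * x := by
      have h2 : y ^ (1 - α) = (κ * x) ^ (1 - α) := by
        rw [Real.mul_rpow hκpos.le hx.le, hκα, hkey]
      have h3 : (y ^ (1 - α)) ^ (1 - α)⁻¹ = ((κ * x) ^ (1 - α)) ^ (1 - α)⁻¹ := by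
        rw [h2]
      rwa [Real.rpow_rpow_inv hy.le h1α', Real.rpow_rpow_inv (by positivity) h1α'] at h3
    rw [hxd, hyd] at hyx
    rw [div_eq_iff hKU.ne'] at hyx
    have hcross : C_U * K_S = κ * C_S * K_U := by
      field_simp at hyx
      linarith
    constructor
    · rw [eq_div_iff hden.ne']
      nlinarith [hcross, hsum]
    · rw [eq_div_iff hden.ne']
      nlinarith [hcross, hsum]
  · rintro ⟨hS, hU⟩
    subst hS hU
    have hKS : 0 < N_f * (κ * C_S) / (κ * C_S + C_U) := by positivity
    have hKU : 0 < N_f * C_U / (κ * C_S + C_U) := by positivity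
    refine ⟨hKS, hKU, ?_, by field_simp⟩
    have hxv : C_S / (N_f * (κ * C_S) / (κ * C_S + C_U)) = (κ * C_S + C_U) / (N_f * κ) := by
      field_simp
    have hyv : C_U / (N_f * C_U / (κ * C_S + C_U)) = (κ * C_S + C_U) / N_f := by
      field_simp
    rw [hxv, hyv]
    set x := (κ * C_S + C_U) / (N_f * κ) with hxd
    have hxpos : 0 < x := by positivity
    have hyx : (κ * C_S + C_U) / N_f = κ * x := by
      rw [hxd]; field_simp
    rw [hyx, Real.mul_rpow hκpos.le hxpos.le, hκα]
    have hxx : x ^ (1 - α) = x * x ^ (-α) := by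
      rw [show (1:ℝ) - α = 1 + (-α) by ring, Real.rpow_add hxpos, Real.rpow_one]
    rw [← hxx]
    field_simp
    ring
end

section
/- Let α ∈ (0,1), κ = α^{1/(1-α)}, and let B, R_0, λ_S, N_m, N_f > 0 and C_U > 0. Define R_M(B_S) = (B − B_S)·R_0/N_m, R_S(B_S) = (κ·λ_S·B_S·R_0 + C_U)/(κ·N_f), and the separate-service revenue S(B_S) = N_m·R_M(B_S)^{1-α} + N_f·R_S(B_S)^{1-α} − (C_U/κ)·R_S(B_S)^{-α} for B_S ∈ [0, B]. Then S is strictly concave on [0, B] and therefore has a unique maximizer B_S^{rev} in [0, B]. -/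
open Real Set

lemma myConvexOn_rpow_neg {p : ℝ} (hp : p < 0) :
    ConvexOn ℝ (Ioi 0) fun x : ℝ => x ^ p := by
  have := strictConvexOn_of_deriv2_pos' (convex_Ioi (0:ℝ))
    (f := fun x : ℝ => x ^ p) ?_ ?_
  · exact this.convexOn
  · intro x hx
    exact (Real.continuousAt_rpow_const x p (Or.inl (ne_of_gt hx))).continuousWithinAt
  · intro x hx
    have hx0 : (0:ℝ) < x := hx
    have hev : deriv (fun y : ℝ => y ^ p) =ᶠ[nhds x]
        fun y : ℝ => p * y ^ (p - 1) := by
      filter_upwards [eventually_ne_nhds hx0.ne'] with y hy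
      exact (Real.hasDerivAt_rpow_const (Or.inl hy)).deriv
    have h2 : deriv^[2] (fun y : ℝ => y ^ p) x
        = p * ((p-1) * x ^ (p - 1 - 1)) := by
      show deriv (deriv (fun y : ℝ => y ^ p)) x = _
      rw [hev.deriv_eq]
      exact (((Real.hasDerivAt_rpow_const (p := p - 1) (Or.inl hx0.ne')).const_mul p)).deriv
    rw [h2]
    have : 0 < p * (p - 1) := mul_pos_of_neg_of_neg hp (by linarith)
    have hxp : 0 < x ^ (p - 1 - 1) := Real.rpow_pos_of_pos hx0 _
    nlinarith

lemma myStrictConcaveComp {g L : ℝ → ℝ} {t s : Set ℝ}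
    (hg : StrictConcaveOn ℝ t g) {c m d : ℝ} (hc : 0 < c) (hm : m ≠ 0)
    (hs : Convex ℝ s) (hmap : ∀ x ∈ s, L x ∈ t) (hL : ∀ x, L x = m * x + d) :
    StrictConcaveOn ℝ s fun x => c * g (L x) := by
  refine ⟨hs, fun x hx y hy hxy p q hp hq hpq => ?_⟩
  have harg : L (p • x + q • y) = p • L x + q • L y := by
    simp only [hL, smul_eq_mul]
    linear_combination (-d) * hpq
  have hne : L x ≠ L y := by
    rw [hL, hL]
    intro h
    exact hxy (mul_left_cancel₀ hm (by linarith))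
  have := hg.2 (hmap x hx) (hmap y hy) hne hp hq hpq
  show p • (c * g (L x)) + q • (c * g (L y)) < c * g (L (p • x + q • y))
  rw [harg]
  simp only [smul_eq_mul] at this ⊢
  nlinarith

lemma myConvexComp {g L : ℝ → ℝ} {t s : Set ℝ}
    (hg : ConvexOn ℝ t g) {c : ℝ} (hc : 0 ≤ c)
    (hs : Convex ℝ s) (hmap : ∀ x ∈ s, L x ∈ t) {m d : ℝ} (hL : ∀ x, L x = m * x + d) :
    ConvexOn ℝ s fun x => c * g (L x) := by
  refine ⟨hs, fun x hx y hy p q hp hq hpq => ?_⟩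
  have harg : L (p • x + q • y) = p • L x + q • L y := by
    simp only [hL, smul_eq_mul]
    linear_combination (-d) * hpq
  have := hg.2 (hmap x hx) (hmap y hy) hp hq hpq
  show c * g (L (p • x + q • y)) ≤ p • (c * g (L x)) + q • (c * g (L y))
  rw [harg]
  simp only [smul_eq_mul] at this ⊢
  nlinarith

/-- the separate-service revenue
`S(B_S) = N_m·R_M(B_S)^(1-α) + N_f·R_S(B_S)^(1-α) − (C_U/κ)·R_S(B_S)^(-α)`
is strictly concave on `[0, B]` and therefore has a unique maximizer there. -/
theorem stmt5 (α κ B R_0 lamS N_m N_f C_U : ℝ) (hα0 : 0 < α) (hα1 : α < 1)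
    (hκ : κ = α ^ (1 / (1 - α)))
    (hB : 0 < B) (hR0 : 0 < R_0) (hlamS : 0 < lamS) (hNm : 0 < N_m) (hNf : 0 < N_f)
    (hCU : 0 < C_U) :
    StrictConcaveOn ℝ (Icc 0 B)
      (fun B_S : ℝ =>
        N_m * ((B - B_S) * R_0 / N_m) ^ (1 - α)
          + N_f * ((κ * lamS * B_S * R_0 + C_U) / (κ * N_f)) ^ (1 - α)
          - (C_U / κ) * ((κ * lamS * B_S * R_0 + C_U) / (κ * N_f)) ^ (-α)) ∧
    ∃! x : ℝ, x ∈ Icc 0 B ∧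
      IsMaxOn (fun B_S : ℝ =>
        N_m * ((B - B_S) * R_0 / N_m) ^ (1 - α)
          + N_f * ((κ * lamS * B_S * R_0 + C_U) / (κ * N_f)) ^ (1 - α)
          - (C_U / κ) * ((κ * lamS * B_S * R_0 + C_U) / (κ * N_f)) ^ (-α)) (Icc 0 B) x := by
  have hκ0 : 0 < κ := hκ ▸ Real.rpow_pos_of_pos hα0 _
  have hp0 : (0:ℝ) < 1 - α := by linarith
  have hp1 : 1 - α < 1 := by linarith
  have hrpow := Real.strictConcaveOn_rpow hp0 hp1
  -- term 1
  have hmap1 : ∀ x ∈ Icc (0:ℝ) B, (B - x) * R_0 / N_m ∈ Ici (0:ℝ) := by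
    intro x hx
    have : 0 ≤ B - x := by linarith [hx.2]
    exact mem_Ici.mpr (by positivity)
  have hm1 : -(R_0 / N_m) ≠ 0 := by
    have := div_pos hR0 hNm; intro h; rw [neg_eq_zero] at h; linarith
  have hc1 : StrictConcaveOn ℝ (Icc 0 B)
      fun x => N_m * ((B - x) * R_0 / N_m) ^ (1 - α) :=
    myStrictConcaveComp hrpow hNm hm1 (convex_Icc 0 B) hmap1
      (m := -(R_0 / N_m)) (d := B * R_0 / N_m) (fun x => by ring)
  -- term 2
  have hpos2 : ∀ x ∈ Icc (0:ℝ) B, 0 < (κ * lamS * x * R_0 + C_U) / (κ * N_f) := by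
    intro x hx
    have hx0 := hx.1
    have hnum : 0 < κ * lamS * x * R_0 + C_U := by positivity
    positivity
  have hm2 : κ * lamS * R_0 / (κ * N_f) ≠ 0 := by positivity
  have hc2 : StrictConcaveOn ℝ (Icc 0 B)
      fun x => N_f * ((κ * lamS * x * R_0 + C_U) / (κ * N_f)) ^ (1 - α) :=
    myStrictConcaveComp hrpow hNf hm2 (convex_Icc 0 B)
      (fun x hx => le_of_lt (hpos2 x hx))
      (m := κ * lamS * R_0 / (κ * N_f)) (d := C_U / (κ * N_f))
      (fun x => by
        have h1 : κ ≠ 0 := hκ0.ne'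
        have h2 : N_f ≠ 0 := hNf.ne'
        field_simp)
  -- term 3
  have hc3 : ConvexOn ℝ (Icc 0 B)
      fun x => (C_U / κ) * ((κ * lamS * x * R_0 + C_U) / (κ * N_f)) ^ (-α) :=
    myConvexComp (myConvexOn_rpow_neg (neg_lt_zero.mpr hα0))
      (le_of_lt (div_pos hCU hκ0)) (convex_Icc 0 B)
      (fun x hx => hpos2 x hx)
      (m := κ * lamS * R_0 / (κ * N_f)) (d := C_U / (κ * N_f))
      (fun x => by
        have h1 : κ ≠ 0 := hκ0.ne'
        have h2 : N_f ≠ 0 := hNf.ne'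
        field_simp)
  have hS := (hc1.add hc2).sub_convexOn hc3
  refine ⟨hS, ?_⟩
  -- continuity
  have hcont : ContinuousOn (fun B_S : ℝ =>
        N_m * ((B - B_S) * R_0 / N_m) ^ (1 - α)
          + N_f * ((κ * lamS * B_S * R_0 + C_U) / (κ * N_f)) ^ (1 - α)
          - (C_U / κ) * ((κ * lamS * B_S * R_0 + C_U) / (κ * N_f)) ^ (-α)) (Icc 0 B) := by
    apply ContinuousOn.sub
    apply ContinuousOn.add
    · exact continuousOn_const.mul
        ((((continuous_const.sub continuous_id).mul continuous_const).div_const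
          N_m).continuousOn.rpow_const (fun x _ => Or.inr hp0.le))
    · exact continuousOn_const.mul
        (((((continuous_const.mul continuous_id).mul
          continuous_const).add continuous_const).div_const
          (κ * N_f)).continuousOn.rpow_const (fun x _ => Or.inr hp0.le))
    · exact continuousOn_const.mul
        (((((continuous_const.mul continuous_id).mul
          continuous_const).add continuous_const).div_const
          (κ * N_f)).continuousOn.rpow_const (fun x hx => Or.inl (hpos2 x hx).ne'))
  obtain ⟨x, hxmem, hxmax⟩ :=
    isCompact_Icc.exists_isMaxOn ⟨0, by simp [hB.le]⟩ hcont
  refine ⟨x, ⟨hxmem, hxmax⟩, ?_⟩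
  rintro y ⟨hy, hymax⟩
  exact hS.eq_of_isMaxOn hymax hxmax hy hxmem
end

section
/- Let α ∈ (0,1), κ = α^{1/(1-α)}, and let B, R_0, λ_S, N_m, N_f > 0 and C_U > 0, and let B_S^{rev} be the unique maximizer over [0, B] of the separate-service revenue S(B_S) = N_m·R_M(B_S)^{1-α} + N_f·R_S(B_S)^{1-α} − (C_U/κ)·R_S(B_S)^{-α}, where R_M(B_S) = (B − B_S)R_0/N_m and R_S(B_S) = (κλ_S B_S R_0 + C_U)/(κN_f). Then B_S^{rev} > 0 if and only if C_U < C_U^{rev}, where C_U^{rev} = (κ·N_f·B·R_0/N_m)·(λ_S/(1−α))^{1/α}; equivalently B_S^{rev} = 0 if and only if C_U ≥ C_U^{rev}. -/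
open Real Set

lemma stmt6_hasDerivAt (α κ B R_0 lamS N_m N_f C_U : ℝ) (hα0 : 0 < α) (hα1 : α < 1)
    (hκ : 0 < κ) (hR0 : 0 < R_0) (hlamS : 0 < lamS) (hNm : 0 < N_m) (hNf : 0 < N_f)
    (hCU : 0 < C_U) {x : ℝ} (hx0 : 0 ≤ x) (hxB : x < B) :
    HasDerivAt (fun B_S : ℝ =>
        N_m * ((B - B_S) * R_0 / N_m) ^ (1 - α)
          + N_f * ((κ * lamS * B_S * R_0 + C_U) / (κ * N_f)) ^ (1 - α)
          - (C_U / κ) * ((κ * lamS * B_S * R_0 + C_U) / (κ * N_f)) ^ (-α))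
      (-((1 - α) * R_0 * ((B - x) * R_0 / N_m) ^ (-α))
        + (1 - α) * lamS * R_0 * ((κ * lamS * x * R_0 + C_U) / (κ * N_f)) ^ (-α)
        + α * (C_U / κ) * (lamS * R_0 / N_f)
            * ((κ * lamS * x * R_0 + C_U) / (κ * N_f)) ^ (-α - 1)) x := by
  have hBx : 0 < B - x := sub_pos.2 hxB
  have hrM : (0:ℝ) < (B - x) * R_0 / N_m := by positivity
  have hrS : (0:ℝ) < (κ * lamS * x * R_0 + C_U) / (κ * N_f) := by positivity
  have h1 : HasDerivAt (fun s : ℝ => (B - s) * R_0 / N_m) (-(R_0 / N_m)) x := by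
    have h := ((hasDerivAt_id' (𝕜 := ℝ) (x := x)).const_sub B).mul_const R_0 |>.div_const N_m
    refine h.congr_deriv ?_
    ring
  have h2 : HasDerivAt (fun s : ℝ => (κ * lamS * s * R_0 + C_U) / (κ * N_f))
      (lamS * R_0 / N_f) x := by
    have h := (((hasDerivAt_id' (𝕜 := ℝ) (x := x)).const_mul (κ * lamS)).mul_const R_0).add_const
      C_U |>.div_const (κ * N_f)
    refine h.congr_deriv ?_
    field_simp
  have h3 := h1.rpow_const (p := 1 - α) (Or.inl hrM.ne')
  have h4 := h2.rpow_const (p := 1 - α) (Or.inl hrS.ne')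
  have h5 := h2.rpow_const (p := -α) (Or.inl hrS.ne')
  have h := ((h3.const_mul N_m).add (h4.const_mul N_f)).sub (h5.const_mul (C_U / κ))
  refine h.congr_deriv ?_
  rw [show (1 - α) - 1 = -α by ring, show (-α) - 1 = -α - 1 by ring]
  field_simp
  ring

set_option maxHeartbeats 1000000 in
theorem stmt6 (α κ B R_0 lamS N_m N_f C_U Brev : ℝ) (hα0 : 0 < α) (hα1 : α < 1)
    (hκ : κ = α ^ (1 / (1 - α)))
    (hB : 0 < B) (hR0 : 0 < R_0) (hlamS : 0 < lamS) (hNm : 0 < N_m) (hNf : 0 < N_f)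
    (hCU : 0 < C_U)
    (hmem : Brev ∈ Icc (0 : ℝ) B)
    (hmax : IsMaxOn (fun B_S : ℝ =>
        N_m * ((B - B_S) * R_0 / N_m) ^ (1 - α)
          + N_f * ((κ * lamS * B_S * R_0 + C_U) / (κ * N_f)) ^ (1 - α)
          - (C_U / κ) * ((κ * lamS * B_S * R_0 + C_U) / (κ * N_f)) ^ (-α)) (Icc 0 B) Brev)
    (huniq : ∀ x ∈ Icc (0 : ℝ) B,
      IsMaxOn (fun B_S : ℝ =>
        N_m * ((B - B_S) * R_0 / N_m) ^ (1 - α)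
          + N_f * ((κ * lamS * B_S * R_0 + C_U) / (κ * N_f)) ^ (1 - α)
          - (C_U / κ) * ((κ * lamS * B_S * R_0 + C_U) / (κ * N_f)) ^ (-α)) (Icc 0 B) x →
      x = Brev) :
    (0 < Brev ↔ C_U < κ * N_f * B * R_0 / N_m * (lamS / (1 - α)) ^ (1 / α)) ∧
    (Brev = 0 ↔ κ * N_f * B * R_0 / N_m * (lamS / (1 - α)) ^ (1 / α) ≤ C_U) := by
  have h1α : 0 < 1 - α := by linarith
  have hκ0 : 0 < κ := by rw [hκ]; positivity
  set f : ℝ → ℝ := fun B_S : ℝ =>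
        N_m * ((B - B_S) * R_0 / N_m) ^ (1 - α)
          + N_f * ((κ * lamS * B_S * R_0 + C_U) / (κ * N_f)) ^ (1 - α)
          - (C_U / κ) * ((κ * lamS * B_S * R_0 + C_U) / (κ * N_f)) ^ (-α) with hfdef
  have hD : ∀ x : ℝ, 0 ≤ x → x < B → HasDerivAt f
      (-((1 - α) * R_0 * ((B - x) * R_0 / N_m) ^ (-α))
        + (1 - α) * lamS * R_0 * ((κ * lamS * x * R_0 + C_U) / (κ * N_f)) ^ (-α)
        + α * (C_U / κ) * (lamS * R_0 / N_f)
            * ((κ * lamS * x * R_0 + C_U) / (κ * N_f)) ^ (-α - 1)) x :=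
    fun x hx0 hxB => stmt6_hasDerivAt α κ B R_0 lamS N_m N_f C_U hα0 hα1 hκ0 hR0 hlamS hNm
      hNf hCU hx0 hxB
  set g0 : ℝ := -((1 - α) * R_0 * (B * R_0 / N_m) ^ (-α))
        + (1 - α) * lamS * R_0 * (C_U / (κ * N_f)) ^ (-α)
        + α * (C_U / κ) * (lamS * R_0 / N_f) * (C_U / (κ * N_f)) ^ (-α - 1) with hg0def
  have hg0 : HasDerivAt f g0 0 := by
    have h := hD 0 le_rfl hB
    rw [show κ * lamS * 0 * R_0 + C_U = C_U by ring, sub_zero] at h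
    exact h
  have hc : (0:ℝ) < C_U / (κ * N_f) := by positivity
  have hM : (0:ℝ) < B * R_0 / N_m := by positivity
  have hc3 : (C_U / (κ * N_f)) ^ (-α - 1) * (C_U / (κ * N_f)) = (C_U / (κ * N_f)) ^ (-α) := by
    rw [← Real.rpow_add_one hc.ne' (-α - 1)]
    norm_num
  have hg0eq : g0 = R_0 * (lamS * (C_U / (κ * N_f)) ^ (-α)
      - (1 - α) * (B * R_0 / N_m) ^ (-α)) := by
    rw [hg0def, ← hc3]
    field_simp
    ring
  set T : ℝ := κ * N_f * B * R_0 / N_m * (lamS / (1 - α)) ^ (1 / α) with hTdef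
  have hKpow : (B * R_0 / N_m * (lamS / (1 - α)) ^ (1 / α)) ^ (-α)
      = (B * R_0 / N_m) ^ (-α) * ((1 - α) / lamS) := by
    rw [Real.mul_rpow hM.le (by positivity),
      ← Real.rpow_mul (by positivity : (0:ℝ) ≤ lamS / (1 - α)),
      show 1 / α * -α = -1 by field_simp,
      Real.rpow_neg_one, inv_div]
  -- key sign equivalence
  have hiff : C_U < T ↔ 0 < g0 := by
    have hpos : (0:ℝ) < κ * N_f := by positivity
    have hK : (0:ℝ) < B * R_0 / N_m * (lamS / (1 - α)) ^ (1 / α) := by positivity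
    have h1 : C_U < T ↔ C_U / (κ * N_f) < B * R_0 / N_m * (lamS / (1 - α)) ^ (1 / α) := by
      rw [hTdef, show κ * N_f * B * R_0 / N_m * (lamS / (1 - α)) ^ (1 / α)
        = (B * R_0 / N_m * (lamS / (1 - α)) ^ (1 / α)) * (κ * N_f) by ring,
        ← div_lt_iff₀ hpos]
    have h2 : C_U / (κ * N_f) < B * R_0 / N_m * (lamS / (1 - α)) ^ (1 / α)
        ↔ (B * R_0 / N_m * (lamS / (1 - α)) ^ (1 / α)) ^ (-α) < (C_U / (κ * N_f)) ^ (-α) :=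
      (Real.rpow_lt_rpow_iff_of_neg hK hc (by linarith)).symm
    rw [h1, h2, hKpow, hg0eq,
      show (B * R_0 / N_m) ^ (-α) * ((1 - α) / lamS)
        = ((1 - α) * (B * R_0 / N_m) ^ (-α)) / lamS by ring,
      div_lt_iff₀ hlamS, mul_pos_iff_of_pos_left hR0, sub_pos, mul_comm lamS _]
  have hiffle : T ≤ C_U ↔ g0 ≤ 0 := by
    rw [← not_lt, ← not_lt]
    exact not_congr hiff
  -- P2 : positive derivative at 0 forbids Brev = 0
  have P2 : 0 < g0 → Brev ≠ 0 := by
    intro hg hb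
    rw [hb] at hmax
    have hloc := hmax.localize
    have hcone : B ∈ posTangentConeAt (Icc (0:ℝ) B) 0 := by
      have h := sub_mem_posTangentConeAt_of_segment_subset (x := (0:ℝ)) (y := B)
        (by rw [segment_eq_Icc hB.le])
      simpa using h
    have hnp := hloc.hasFDerivWithinAt_nonpos hg0.hasDerivWithinAt hcone
    simp only [ContinuousLinearMap.toSpanSingleton_apply, ContinuousLinearMap.smulRight_apply, ContinuousLinearMap.one_apply,
      smul_eq_mul] at hnp
    nlinarith
  -- P1 : nonpositive derivative at 0 forces Brev = 0
  have P1 : g0 ≤ 0 → Brev = 0 := by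
    intro hg
    refine (huniq 0 ⟨le_rfl, hB.le⟩ ?_).symm
    have hcont : ContinuousOn f (Icc 0 B) := by
      apply ContinuousOn.sub
      apply ContinuousOn.add
      · exact continuousOn_const.mul (ContinuousOn.rpow_const (by fun_prop)
          (fun x hx => Or.inr h1α.le))
      · refine continuousOn_const.mul (ContinuousOn.rpow_const (by fun_prop)
          (fun x hx => Or.inl ?_))
        have : (0:ℝ) < (κ * lamS * x * R_0 + C_U) / (κ * N_f) := by
          have hx0 : 0 ≤ x := hx.1
          positivity
        exact this.ne'
      · refine continuousOn_const.mul (ContinuousOn.rpow_const (by fun_prop)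
          (fun x hx => Or.inl ?_))
        have : (0:ℝ) < (κ * lamS * x * R_0 + C_U) / (κ * N_f) := by
          have hx0 : 0 ≤ x := hx.1
          positivity
        exact this.ne'
    have hant : AntitoneOn f (Icc 0 B) := by
      refine antitoneOn_of_deriv_nonpos (convex_Icc 0 B) hcont ?_ ?_
      · rw [interior_Icc]
        exact fun x hx => ((hD x hx.1.le hx.2).differentiableAt).differentiableWithinAt
      · rw [interior_Icc]
        intro x hx
        rw [(hD x hx.1.le hx.2).deriv]
        have hBx : 0 < B - x := sub_pos.2 hx.2
        have hrM : (0:ℝ) < (B - x) * R_0 / N_m := by positivity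
        have hx0 : (0:ℝ) < x := hx.1
        have ha : (B * R_0 / N_m) ^ (-α) ≤ ((B - x) * R_0 / N_m) ^ (-α) := by
          apply Real.rpow_le_rpow_of_nonpos hrM (by gcongr <;> linarith) (by linarith)
        have hb' : ((κ * lamS * x * R_0 + C_U) / (κ * N_f)) ^ (-α)
            ≤ (C_U / (κ * N_f)) ^ (-α) := by
          apply Real.rpow_le_rpow_of_nonpos hc (by gcongr; exact le_add_of_nonneg_left (by positivity)) (by linarith)
        have hc' : ((κ * lamS * x * R_0 + C_U) / (κ * N_f)) ^ (-α - 1)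
            ≤ (C_U / (κ * N_f)) ^ (-α - 1) := by
          apply Real.rpow_le_rpow_of_nonpos hc (by gcongr; exact le_add_of_nonneg_left (by positivity)) (by linarith)
        have t1 : -((1 - α) * R_0 * ((B - x) * R_0 / N_m) ^ (-α))
            ≤ -((1 - α) * R_0 * (B * R_0 / N_m) ^ (-α)) :=
          neg_le_neg (mul_le_mul_of_nonneg_left ha (by positivity))
        have t2 : (1 - α) * lamS * R_0 * ((κ * lamS * x * R_0 + C_U) / (κ * N_f)) ^ (-α)
            ≤ (1 - α) * lamS * R_0 * (C_U / (κ * N_f)) ^ (-α) :=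
          mul_le_mul_of_nonneg_left hb' (by positivity)
        have t3 : α * (C_U / κ) * (lamS * R_0 / N_f)
              * ((κ * lamS * x * R_0 + C_U) / (κ * N_f)) ^ (-α - 1)
            ≤ α * (C_U / κ) * (lamS * R_0 / N_f) * (C_U / (κ * N_f)) ^ (-α - 1) :=
          mul_le_mul_of_nonneg_left hc' (by positivity)
        rw [hg0def] at hg
        linarith
    exact isMaxOn_iff.mpr fun x hx => hant (left_mem_Icc.2 hB.le) hx hx.1
  constructor
  · constructor
    · intro h
      by_contra hcontra
      push_neg at hcontra
      have := P1 (hiffle.mp hcontra)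
      linarith
    · intro h
      exact lt_of_le_of_ne hmem.1 (Ne.symm (P2 (hiff.mp h)))
  · constructor
    · intro h
      by_contra hcontra
      push_neg at hcontra
      exact P2 (hiff.mp hcontra) h
    · intro h
      exact P1 (hiffle.mp h)
end

section
/- Let α ∈ (0,1) and B, R_0, λ_S, N_m, N_f > 0. The function S_0(B_S) = N_m·((B − B_S)·R_0/N_m)^{1-α} + N_f·(λ_S·B_S·R_0/N_f)^{1-α} on [0, B] (the separate-service revenue with no unlicensed spectrum) has a unique maximizer, given explicitly by B̃_S = N_f·B/(N_f + N_m·λ_S^{1 − 1/α}); in particular 0 < B̃_S < B. -/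
open Real Set

lemma tangent_lt {p s t : ℝ} (hp0 : 0 < p) (hp1 : p < 1) (hs : 0 < s) (ht : 0 ≤ t)
    (hne : t ≠ s) : t ^ p < s ^ p + p * s ^ (p - 1) * (t - s) := by
  have hu : -1 ≤ t / s - 1 := by
    have : 0 ≤ t / s := div_nonneg ht hs.le
    linarith
  have hu' : t / s - 1 ≠ 0 := by
    intro h
    apply hne
    field_simp at h
    linarith
  have key := rpow_one_add_lt_one_add_mul_self hu hu' hp0 hp1
  rw [add_sub_cancel] at key
  have hsp : 0 < s ^ p := rpow_pos_of_pos hs p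
  have key2 : (t / s) ^ p * s ^ p < (1 + p * (t / s - 1)) * s ^ p :=
    (mul_lt_mul_iff_left₀ hsp).mpr key
  rw [div_rpow ht hs.le, div_mul_cancel₀] at key2
  · calc t ^ p < (1 + p * (t / s - 1)) * s ^ p := key2
      _ = s ^ p + p * s ^ (p - 1) * (t - s) := by
          rw [rpow_sub_one hs.ne']
          field_simp
  · exact (rpow_pos_of_pos hs p).ne'

lemma tangent_le {p s t : ℝ} (hp0 : 0 < p) (hp1 : p < 1) (hs : 0 < s) (ht : 0 ≤ t) :
    t ^ p ≤ s ^ p + p * s ^ (p - 1) * (t - s) := by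
  rcases eq_or_ne t s with rfl | h
  · simp
  · exact (tangent_lt hp0 hp1 hs ht h).le

/-- with no unlicensed spectrum, the separate-service revenue
`S_0(B_S) = N_m·((B − B_S)·R_0/N_m)^(1-α) + N_f·(λ_S·B_S·R_0/N_f)^(1-α)` on `[0, B]`
has the unique maximizer `B̃_S = N_f·B/(N_f + N_m·λ_S^(1 − 1/α))`, which lies in `(0, B)`. -/
theorem stmt7 (α B R_0 lamS N_m N_f : ℝ) (hα0 : 0 < α) (hα1 : α < 1)
    (hB : 0 < B) (hR0 : 0 < R_0) (hlamS : 0 < lamS) (hNm : 0 < N_m) (hNf : 0 < N_f) :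
    IsMaxOn (fun B_S : ℝ =>
        N_m * ((B - B_S) * R_0 / N_m) ^ (1 - α)
          + N_f * (lamS * B_S * R_0 / N_f) ^ (1 - α)) (Icc 0 B)
      (N_f * B / (N_f + N_m * lamS ^ (1 - 1 / α))) ∧
    (∀ x ∈ Icc (0 : ℝ) B,
      IsMaxOn (fun B_S : ℝ =>
        N_m * ((B - B_S) * R_0 / N_m) ^ (1 - α)
          + N_f * (lamS * B_S * R_0 / N_f) ^ (1 - α)) (Icc 0 B) x →
      x = N_f * B / (N_f + N_m * lamS ^ (1 - 1 / α))) ∧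
    0 < N_f * B / (N_f + N_m * lamS ^ (1 - 1 / α)) ∧
    N_f * B / (N_f + N_m * lamS ^ (1 - 1 / α)) < B := by
  set p : ℝ := 1 - α with hp
  have hp0 : 0 < p := by simp [hp]; linarith
  have hp1 : p < 1 := by simp [hp]; linarith
  set L : ℝ := lamS ^ (1 - 1 / α) with hL
  have hL0 : 0 < L := rpow_pos_of_pos hlamS _
  set D : ℝ := N_f + N_m * L with hD
  have hD0 : 0 < D := by positivity
  set b : ℝ := N_f * B / D with hb
  have hb0 : 0 < b := by positivity
  have hbB : b < B := by
    rw [hb, div_lt_iff₀ hD0, hD]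
    nlinarith [mul_pos hB (mul_pos hNm hL0)]
  set f : ℝ → ℝ := fun B_S : ℝ =>
        N_m * ((B - B_S) * R_0 / N_m) ^ p
          + N_f * (lamS * B_S * R_0 / N_f) ^ p with hf
  set s1 : ℝ := (B - b) * R_0 / N_m with hs1
  set s2 : ℝ := lamS * b * R_0 / N_f with hs2
  have hs10 : 0 < s1 := by
    apply div_pos _ hNm
    have : 0 < B - b := by linarith
    positivity
  have hs20 : 0 < s2 := by positivity
  -- key relation: s1 = lamS^(-1/α) * s2
  have hrel : s1 = lamS ^ (-1 / α) * s2 := by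
    rw [hs1, hs2, hb]
    have hBb : B - N_f * B / D = B * N_m * L / D := by
      field_simp [hD]
      ring
    rw [hBb, hL]
    have : lamS ^ (1 - 1/α) = lamS ^ (-1/α) * lamS := by
      rw [← rpow_add_one hlamS.ne' (-1/α)]
      congr 1
      ring
    rw [this]
    field_simp
  have hkey : s1 ^ (p - 1) = lamS * s2 ^ (p - 1) := by
    rw [hrel, mul_rpow (rpow_nonneg hlamS.le _) hs20.le, ← rpow_mul hlamS.le]
    have hexp : -1 / α * (p - 1) = 1 := by
      rw [hp]
      field_simp
      ring
    rw [hexp, rpow_one]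
  -- main strict inequality
  have main : ∀ x ∈ Icc (0:ℝ) B, x ≠ b → f x < f b := by
    intro x hx hne
    obtain ⟨hx0, hxB⟩ := hx
    set t1 : ℝ := (B - x) * R_0 / N_m with ht1
    set t2 : ℝ := lamS * x * R_0 / N_f with ht2
    have ht10 : 0 ≤ t1 := by
      apply div_nonneg _ hNm.le
      have : 0 ≤ B - x := by linarith
      positivity
    have ht20 : 0 ≤ t2 := by positivity
    have ht2ne : t2 ≠ s2 := by
      rw [ht2, hs2]
      intro h
      apply hne
      field_simp at h
      exact h
    have A1 : t1 ^ p ≤ s1 ^ p + p * s1 ^ (p - 1) * (t1 - s1) :=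
      tangent_le hp0 hp1 hs10 ht10
    have A2 : t2 ^ p < s2 ^ p + p * s2 ^ (p - 1) * (t2 - s2) :=
      tangent_lt hp0 hp1 hs20 ht20 ht2ne
    have e1 : N_m * (t1 - s1) = R_0 * (b - x) := by
      rw [ht1, hs1]
      field_simp
      ring
    have e2 : N_f * (t2 - s2) = lamS * R_0 * (x - b) := by
      rw [ht2, hs2]
      field_simp
    have hlin : N_m * (p * s1 ^ (p - 1) * (t1 - s1))
        + N_f * (p * s2 ^ (p - 1) * (t2 - s2)) = 0 := by
      have : N_m * (p * s1 ^ (p - 1) * (t1 - s1))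
          + N_f * (p * s2 ^ (p - 1) * (t2 - s2))
          = p * s1 ^ (p - 1) * (N_m * (t1 - s1))
            + p * s2 ^ (p - 1) * (N_f * (t2 - s2)) := by ring
      rw [this, e1, e2, hkey]
      ring
    have hfx : f x = N_m * t1 ^ p + N_f * t2 ^ p := rfl
    have hfb : f b = N_m * s1 ^ p + N_f * s2 ^ p := rfl
    rw [hfx, hfb]
    nlinarith [mul_le_mul_of_nonneg_left A1 hNm.le, (mul_lt_mul_iff_right₀ hNf).mpr A2]
  have hbmem : b ∈ Icc (0:ℝ) B := ⟨hb0.le, hbB.le⟩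
  refine ⟨?_, ?_, hb0, hbB⟩
  · rw [isMaxOn_iff]
    intro x hx
    rcases eq_or_ne x b with rfl | h
    · exact le_refl _
    · exact (main x hx h).le
  · intro x hx hmax
    by_contra h
    have h1 := main x hx h
    have h2 := isMaxOn_iff.mp hmax b hbmem
    exact absurd (lt_of_le_of_lt h2 h1) (lt_irrefl _)
end

section
/- For every α ∈ (0,1), the equation (1−α)·(1+β)^{1+α} − β = 1−α has exactly one solution β* in (0, ∞). -/
open Real

lemma stmt8_unique_aux (α : ℝ) (hα0 : 0 < α) (hα1 : α < 1) (b₁ b₂ : ℝ)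
    (hb₁ : 0 < b₁ ∧ (1 - α) * (1 + b₁) ^ (1 + α) - b₁ = 1 - α)
    (hb₂ : 0 < b₂ ∧ (1 - α) * (1 + b₂) ^ (1 + α) - b₂ = 1 - α)
    (hlt : b₁ < b₂) : False := by
  obtain ⟨hb₁0, he₁⟩ := hb₁
  obtain ⟨hb₂0, he₂⟩ := hb₂
  have h1α : (0:ℝ) < 1 - α := by linarith
  have key : ∀ b : ℝ, (1 - α) * (1 + b) ^ (1 + α) - b = 1 - α →
      (1 + b) ^ (1 + α) = 1 + b / (1 - α) := by
    intro b hb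
    have : (1 - α) * (1 + b) ^ (1 + α) = (1 - α) * (1 + b / (1 - α)) := by
      field_simp
      linarith
    exact mul_left_cancel₀ h1α.ne' this
  have k₁ := key b₁ he₁
  have k₂ := key b₂ he₂
  set t : ℝ := b₁ / b₂ with ht
  have ht0 : 0 < t := div_pos hb₁0 hb₂0
  have ht1 : t < 1 := (div_lt_one hb₂0).mpr hlt
  have hsum : (1 - t) + t = 1 := by ring
  have hmem1 : (1:ℝ) ∈ Set.Ici (0:ℝ) := by norm_num
  have hmem2 : (1 + b₂) ∈ Set.Ici (0:ℝ) := by simp; linarith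
  have hne : (1:ℝ) ≠ 1 + b₂ := by intro h; linarith [h]
  have hconv := (strictConvexOn_rpow (p := 1 + α) (by linarith)).2
      hmem1 hmem2 hne (by linarith : (0:ℝ) < 1 - t) ht0 hsum
  have hcomb : (1 - t) * 1 + t * (1 + b₂) = 1 + b₁ := by
    have : t * b₂ = b₁ := div_mul_cancel₀ b₁ hb₂0.ne'
    nlinarith [this]
  simp only [smul_eq_mul] at hconv
  rw [hcomb] at hconv
  rw [k₁, k₂, Real.one_rpow] at hconv
  have htb : t * b₂ = b₁ := div_mul_cancel₀ b₁ hb₂0.ne'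
  have : (1 - t) * 1 + t * (1 + b₂ / (1 - α)) = 1 + b₁ / (1 - α) := by
    field_simp
    nlinarith [htb]
  rw [this] at hconv
  exact lt_irrefl _ hconv

/-- for every α ∈ (0,1), the equation `(1−α)·(1+β)^(1+α) − β = 1−α`
has exactly one solution `β*` in `(0, ∞)`. -/
theorem stmt8 (α : ℝ) (hα0 : 0 < α) (hα1 : α < 1) :
    ∃! β : ℝ, 0 < β ∧ (1 - α) * (1 + β) ^ (1 + α) - β = 1 - α := by
  have h1α : (0:ℝ) < 1 - α := by linarith
  set f : ℝ → ℝ := fun β => (1 - α) * (1 + β) ^ (1 + α) - β - (1 - α) with hf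
  have hcont : Continuous f := by
    apply Continuous.sub
    apply Continuous.sub
    · exact continuous_const.mul
        ((continuous_const.add continuous_id).rpow_const (fun x => Or.inr (by linarith)))
    · exact continuous_id
    · exact continuous_const
  -- small point a with f a < 0
  set a : ℝ := α / (2 * (1 - α)) with ha
  have ha0 : 0 < a := div_pos hα0 (by linarith)
  have hfa : f a < 0 := by
    have h1 : (1 + a) ^ α ≤ 1 + α * a :=
      rpow_one_add_le_one_add_mul_self (by linarith) hα0.le hα1.le
    have hsplit : (1 + a) ^ (1 + α) = (1 + a) * (1 + a) ^ α := by
      rw [Real.rpow_add (by linarith), Real.rpow_one]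
    have h2 : (1 + a) ^ (1 + α) ≤ (1 + a) * (1 + α * a) := by
      rw [hsplit]
      exact mul_le_mul_of_nonneg_left h1 (by linarith)
    have h3 : f a ≤ (1 - α) * ((1 + a) * (1 + α * a)) - a - (1 - α) := by
      have := mul_le_mul_of_nonneg_left h2 h1α.le
      simp only [hf]
      linarith
    have haval : (1 - α) * a = α / 2 := by
      rw [ha]; field_simp
    have h4 : (1 - α) * ((1 + a) * (1 + α * a)) - a - (1 - α) = α * a * ((1 - α) * a - α) := by
      ring
    rw [h4, haval] at h3
    have : α * a * (α / 2 - α) < 0 := by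
      apply mul_neg_of_pos_of_neg (mul_pos hα0 ha0)
      linarith
    exact h3.trans_lt this
  -- large point B with f B > 0
  set c : ℝ := (2 / (1 - α)) ^ (α⁻¹) - 1 with hc
  set B : ℝ := max c (a + 1) with hB
  have haB : a < B := lt_of_lt_of_le (by linarith) (le_max_right _ _)
  have h2α : (0:ℝ) ≤ 2 / (1 - α) := by positivity
  have hcpow : (1 + c) ^ α = 2 / (1 - α) := by
    rw [hc]
    have : 1 + ((2 / (1 - α)) ^ (α⁻¹) - 1) = (2 / (1 - α)) ^ (α⁻¹) := by ring
    rw [this, Real.rpow_inv_rpow h2α hα0.ne']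
  have h1c : (0:ℝ) ≤ 1 + c := by
    rw [hc]
    have h21 : (1:ℝ) ≤ 2 / (1 - α) := by
      rw [le_div_iff₀ h1α]; linarith
    have : (1:ℝ) ≤ (2 / (1 - α)) ^ (α⁻¹) := by
      calc (1:ℝ) = (1:ℝ) ^ (α⁻¹) := (Real.one_rpow _).symm
        _ ≤ (2 / (1 - α)) ^ (α⁻¹) := Real.rpow_le_rpow zero_le_one h21 (by positivity)
    linarith
  have hfB : 0 < f B := by
    have h1B : (0:ℝ) ≤ 1 + B := by
      have : c ≤ B := le_max_left _ _
      linarith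
    have hBpow : 2 / (1 - α) ≤ (1 + B) ^ α := by
      rw [← hcpow]
      exact Real.rpow_le_rpow h1c (by linarith [le_max_left c (a+1)]) hα0.le
    have hsplit : (1 + B) ^ (1 + α) = (1 + B) * (1 + B) ^ α := by
      rw [Real.rpow_add (by linarith [haB, ha0]), Real.rpow_one]
    have h1Bpos : (0:ℝ) < 1 + B := by linarith [haB, ha0]
    have h2 : (1 + B) * (2 / (1 - α)) ≤ (1 + B) ^ (1 + α) := by
      rw [hsplit]
      exact mul_le_mul_of_nonneg_left hBpow h1Bpos.le
    have h3 : (1 - α) * ((1 + B) * (2 / (1 - α))) ≤ (1 - α) * (1 + B) ^ (1 + α) :=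
      mul_le_mul_of_nonneg_left h2 h1α.le
    have h4 : (1 - α) * ((1 + B) * (2 / (1 - α))) = 2 * (1 + B) := by
      field_simp
    rw [h4] at h3
    have : 0 < 2 * (1 + B) - B - (1 - α) := by
      have : a < B := haB
      nlinarith [ha0]
    simp only [hf]
    linarith
  -- IVT
  have hiv : (0:ℝ) ∈ f '' Set.Icc a B := by
    apply intermediate_value_Icc haB.le hcont.continuousOn
    exact ⟨hfa.le, hfB.le⟩
  obtain ⟨β, hβmem, hβeq⟩ := hiv
  refine ⟨β, ⟨lt_of_lt_of_le ha0 hβmem.1, by simp only [hf] at hβeq; linarith⟩, ?_⟩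
  intro y hy
  have hβroot : 0 < β ∧ (1 - α) * (1 + β) ^ (1 + α) - β = 1 - α :=
    ⟨lt_of_lt_of_le ha0 hβmem.1, by simp only [hf] at hβeq; linarith⟩
  rcases lt_trichotomy y β with h | h | h
  · exact absurd h (fun h => stmt8_unique_aux α hα0 hα1 y β hy hβroot h)
  · exact h
  · exact absurd h (fun h => stmt8_unique_aux α hα0 hα1 β y hβroot hy h)
end

section
/- Let α ∈ (0,1) and a > 0, and let β* be the unique strictly positive solution of (1−α)(1+β)^{1+α} − β = 1−α. Define M(C) = (1−α)·((a+C)^{1+α} − a^{1+α}) − C·a^{α} for C ≥ 0. Then M(0) = 0, M(C) < 0 for 0 < C < β*·a, and M(C) > 0 for C > β*·a; in particular C = β*·a is the unique strictly positive zero of M. -/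
open Real

private lemma Mfact (α a C : ℝ) (ha : 0 < a) (hC : 0 ≤ C) :
    (1 - α) * ((a + C) ^ (1 + α) - a ^ (1 + α)) - C * a ^ α
      = a ^ (1 + α) * ((1 - α) * (1 + C / a) ^ (1 + α) - C / a - (1 - α)) := by
  have h1 : (a + C) ^ (1 + α) = a ^ (1 + α) * (1 + C / a) ^ (1 + α) := by
    have hac : a * (1 + C / a) = a + C := by field_simp
    rw [← hac, Real.mul_rpow ha.le (by positivity)]
  have h2 : a ^ (1 + α) * (C / a) = C * a ^ α := by
    rw [Real.rpow_add ha, Real.rpow_one]; field_simp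
  rw [h1, ← h2]; ring

private lemma gneg (α βs : ℝ) (hα0 : 0 < α) (hα1 : α < 1) (hβs : 0 < βs)
    (hroot : (1 - α) * (1 + βs) ^ (1 + α) - βs = 1 - α)
    {β : ℝ} (h0 : 0 < β) (h1 : β < βs) :
    (1 - α) * (1 + β) ^ (1 + α) - β - (1 - α) < 0 := by
  have hconv := strictConvexOn_rpow (show (1 : ℝ) < 1 + α by linarith)
  set t := β / βs with htdef
  have ht0 : 0 < t := div_pos h0 hβs
  have ht1 : t < 1 := (div_lt_one hβs).2 h1
  have htβ : t * βs = β := div_mul_cancel₀ β hβs.ne'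
  have key := hconv.2 (show (1 : ℝ) ∈ Set.Ici 0 by norm_num)
    (show (1 + βs) ∈ Set.Ici 0 by simp; linarith)
    (show (1 : ℝ) ≠ 1 + βs by intro h; nlinarith)
    (show 0 < 1 - t by linarith) ht0 (by ring)
  simp only [smul_eq_mul, Real.one_rpow, mul_one] at key
  have hcomb : (1 - t + t * (1 + βs)) = 1 + β := by
    rw [← htβ]; ring
  rw [hcomb] at key
  have hP : (1 - α) * (1 + βs) ^ (1 + α) = 1 - α + βs := by linarith
  nlinarith [mul_lt_mul_of_pos_left key (show (0:ℝ) < 1 - α by linarith)]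

private lemma gpos (α βs : ℝ) (hα0 : 0 < α) (hα1 : α < 1) (hβs : 0 < βs)
    (hroot : (1 - α) * (1 + βs) ^ (1 + α) - βs = 1 - α)
    {β : ℝ} (h1 : βs < β) :
    0 < (1 - α) * (1 + β) ^ (1 + α) - β - (1 - α) := by
  have h0 : 0 < β := lt_trans hβs h1
  have hconv := strictConvexOn_rpow (show (1 : ℝ) < 1 + α by linarith)
  set t := βs / β with htdef
  have ht0 : 0 < t := div_pos hβs h0
  have ht1 : t < 1 := (div_lt_one h0).2 h1
  have htβ : t * β = βs := div_mul_cancel₀ βs h0.ne'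
  have key := hconv.2 (show (1 : ℝ) ∈ Set.Ici 0 by norm_num)
    (show (1 + β) ∈ Set.Ici 0 by simp; linarith)
    (show (1 : ℝ) ≠ 1 + β by intro h; nlinarith)
    (show 0 < 1 - t by linarith) ht0 (by ring)
  simp only [smul_eq_mul, Real.one_rpow, mul_one] at key
  have hcomb : (1 - t + t * (1 + β)) = 1 + βs := by
    rw [← htβ]; ring
  rw [hcomb] at key
  have hP : (1 - α) * (1 + βs) ^ (1 + α) = 1 - α + βs := by linarith
  -- key : (1+βs)^(1+α) < (1-t) + t*(1+β)^(1+α)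
  have h2 := mul_lt_mul_of_pos_left key (show (0:ℝ) < 1 - α by linarith)
  -- (1-α)+βs < (1-α)(1-t) + t(1-α)Q ; βs = tβ
  have h3 : t * β + t * (1 - α) < t * ((1 - α) * (1 + β) ^ (1 + α)) := by nlinarith
  nlinarith [mul_pos ht0 h0]

/-- with `β*` the unique strictly positive solution of
`(1−α)(1+β)^(1+α) − β = 1−α` and `M(C) = (1−α)·((a+C)^(1+α) − a^(1+α)) − C·a^α`,
we have `M(0) = 0`, `M(C) < 0` for `0 < C < β*·a`, and `M(C) > 0` for `C > β*·a`;
in particular `C = β*·a` is the unique strictly positive zero of `M`. -/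
theorem stmt9 (α a βs : ℝ) (hα0 : 0 < α) (hα1 : α < 1) (ha : 0 < a)
    (hβs : 0 < βs) (hroot : (1 - α) * (1 + βs) ^ (1 + α) - βs = 1 - α)
    (huniq : ∀ β : ℝ, 0 < β → (1 - α) * (1 + β) ^ (1 + α) - β = 1 - α → β = βs) :
    ((1 - α) * ((a + 0) ^ (1 + α) - a ^ (1 + α)) - 0 * a ^ α = 0) ∧
    (∀ C : ℝ, 0 < C → C < βs * a →
      (1 - α) * ((a + C) ^ (1 + α) - a ^ (1 + α)) - C * a ^ α < 0) ∧
    (∀ C : ℝ, βs * a < C →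
      0 < (1 - α) * ((a + C) ^ (1 + α) - a ^ (1 + α)) - C * a ^ α) ∧
    (∀ C : ℝ, 0 < C →
      (1 - α) * ((a + C) ^ (1 + α) - a ^ (1 + α)) - C * a ^ α = 0 → C = βs * a) := by
  have hpa : 0 < a ^ (1 + α) := Real.rpow_pos_of_pos ha _
  refine ⟨by ring_nf, ?_, ?_, ?_⟩
  · intro C hC hCa
    rw [Mfact α a C ha hC.le]
    have hβ : C / a < βs := (div_lt_iff₀ ha).2 (by linarith [mul_comm βs a])
    have := gneg α βs hα0 hα1 hβs hroot (div_pos hC ha) hβ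
    exact mul_neg_of_pos_of_neg hpa this
  · intro C hCa
    have hC : 0 < C := lt_trans (by positivity) hCa
    rw [Mfact α a C ha hC.le]
    have hβ : βs < C / a := (lt_div_iff₀ ha).2 (by linarith [mul_comm βs a])
    exact mul_pos hpa (gpos α βs hα0 hα1 hβs hroot hβ)
  · intro C hC hM
    rw [Mfact α a C ha hC.le] at hM
    have hg : (1 - α) * (1 + C / a) ^ (1 + α) - C / a - (1 - α) = 0 := by
      rcases mul_eq_zero.1 hM with h | h
      · exact absurd h hpa.ne'
      · exact h
    have := huniq (C / a) (div_pos hC ha) (by linarith)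
    field_simp at this
    linarith [this]
end

section
/- Let α ∈ (0,1), κ = α^{1/(1-α)}, and let B, R_0, λ_S, N_m, N_f > 0. For C_U ≥ 0 let S(B_S; C_U) = N_m·((B−B_S)R_0/N_m)^{1-α} + N_f·R_S^{1-α} − (C_U/κ)·R_S^{-α} with R_S = (κλ_S B_S R_0 + C_U)/(κN_f), let B_S^{rev}(C_U) be its unique maximizer on [0,B], and let B̃_S = N_f B/(N_f + N_m λ_S^{1−1/α}) be the maximizer for C_U = 0. Set C_U^{th} = β*·κ·λ_S·B̃_S·R_0, where β* is the unique positive root of (1−α)(1+β)^{1+α} − β = 1−α. Then: (i) if 0 < C_U < C_U^{th}, then B_S^{rev}(C_U) > B̃_S; (ii) if C_U > C_U^{th}, then B_S^{rev}(C_U) < B̃_S. -/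
open Real Set

noncomputable def Sf (α κ B R_0 lamS N_m N_f C_U : ℝ) : ℝ → ℝ := fun b : ℝ =>
  N_m * ((B - b) * R_0 / N_m) ^ (1 - α)
    + N_f * ((κ * lamS * b * R_0 + C_U) / (κ * N_f)) ^ (1 - α)
    - (C_U / κ) * ((κ * lamS * b * R_0 + C_U) / (κ * N_f)) ^ (-α)

noncomputable def Sd (α κ B R_0 lamS N_m N_f C_U b : ℝ) : ℝ :=
  -((1 - α) * R_0 * ((B - b) * R_0 / N_m) ^ (-α))
    + (1 - α) * lamS * R_0 * ((κ * lamS * b * R_0 + C_U) / (κ * N_f)) ^ (-α)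
    + α * lamS * R_0 * C_U / (κ * N_f) * ((κ * lamS * b * R_0 + C_U) / (κ * N_f)) ^ (-α - 1)

lemma Sf_hasDerivAt (α κ B R_0 lamS N_m N_f C_U b : ℝ)
    (hα0 : 0 < α) (hα1 : α < 1) (hκ : 0 < κ) (hR0 : 0 < R_0)
    (hNm : 0 < N_m) (hNf : 0 < N_f)
    (h1 : 0 < B - b) (h2 : 0 < κ * lamS * b * R_0 + C_U) :
    HasDerivAt (Sf α κ B R_0 lamS N_m N_f C_U) (Sd α κ B R_0 lamS N_m N_f C_U b) b := by
  have hbase1 : (0:ℝ) < (B - b) * R_0 / N_m := by positivity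
  have hbase2 : (0:ℝ) < (κ * lamS * b * R_0 + C_U) / (κ * N_f) := by positivity
  have hd1 : HasDerivAt (fun x : ℝ => (B - x) * R_0 / N_m) (-1 * R_0 / N_m) b :=
    (((hasDerivAt_id b).const_sub B).mul_const R_0).div_const N_m
  have hd2 : HasDerivAt (fun x : ℝ => (κ * lamS * x * R_0 + C_U) / (κ * N_f))
      (κ * lamS * 1 * R_0 / (κ * N_f)) b :=
    ((((hasDerivAt_id b).const_mul (κ * lamS)).mul_const R_0).add_const C_U).div_const (κ * N_f)
  have ht1 := (hd1.rpow_const (p := 1 - α) (Or.inl hbase1.ne')).const_mul N_m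
  have ht2 := (hd2.rpow_const (p := 1 - α) (Or.inl hbase2.ne')).const_mul N_f
  have ht3 := (hd2.rpow_const (p := -α) (Or.inl hbase2.ne')).const_mul (C_U / κ)
  have key := (ht1.add ht2).sub ht3
  have heq : Sd α κ B R_0 lamS N_m N_f C_U b
      = N_m * (-1 * R_0 / N_m * (1 - α) * ((B - b) * R_0 / N_m) ^ (1 - α - 1))
        + N_f * (κ * lamS * 1 * R_0 / (κ * N_f) * (1 - α)
            * ((κ * lamS * b * R_0 + C_U) / (κ * N_f)) ^ (1 - α - 1))
        - C_U / κ * (κ * lamS * 1 * R_0 / (κ * N_f) * -α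
            * ((κ * lamS * b * R_0 + C_U) / (κ * N_f)) ^ (-α - 1)) := by
    rw [show (1:ℝ) - α - 1 = -α by ring]
    unfold Sd
    field_simp
    ring
  rw [heq]
  exact key

lemma Sf_contOn (α κ B R_0 lamS N_m N_f C_U : ℝ) (hα1 : α < 1)
    (hκ : 0 < κ) (hR0 : 0 < R_0) (hlamS : 0 < lamS) (hNf : 0 < N_f) (hCU : 0 < C_U) :
    ContinuousOn (Sf α κ B R_0 lamS N_m N_f C_U) (Icc 0 B) := by
  have h1α : (0:ℝ) ≤ 1 - α := by linarith
  have hb2 : ∀ x ∈ Icc (0:ℝ) B, (κ * lamS * x * R_0 + C_U) / (κ * N_f) ≠ 0 := by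
    intro x hx
    have h0 : 0 ≤ κ * lamS * x * R_0 :=
      mul_nonneg (mul_nonneg (mul_nonneg hκ.le hlamS.le) hx.1) hR0.le
    have : 0 < (κ * lamS * x * R_0 + C_U) / (κ * N_f) :=
      div_pos (by linarith) (by positivity)
    exact this.ne'
  have hc1 : ContinuousOn (fun x : ℝ => (B - x) * R_0 / N_m) (Icc 0 B) :=
    (((continuous_const.sub continuous_id).mul continuous_const).div_const N_m).continuousOn
  have hc2 : ContinuousOn (fun x : ℝ => (κ * lamS * x * R_0 + C_U) / (κ * N_f)) (Icc 0 B) :=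
    ((((continuous_const.mul continuous_id).mul continuous_const).add
      continuous_const).div_const (κ * N_f)).continuousOn
  unfold Sf
  exact ((continuousOn_const.mul (hc1.rpow_const fun x _ => Or.inr h1α)).add
      (continuousOn_const.mul (hc2.rpow_const fun x hx => Or.inl (hb2 x hx)))).sub
    (continuousOn_const.mul (hc2.rpow_const fun x hx => Or.inl (hb2 x hx)))

lemma Sd_strictAnti (α κ B R_0 lamS N_m N_f C_U x y : ℝ)
    (hα0 : 0 < α) (hα1 : α < 1) (hκ : 0 < κ) (hR0 : 0 < R_0)
    (hNm : 0 < N_m) (hNf : 0 < N_f) (hlamS : 0 < lamS) (hCU : 0 ≤ C_U)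
    (hx0 : 0 < x) (hxy : x < y) (hyB : y < B) :
    Sd α κ B R_0 lamS N_m N_f C_U y < Sd α κ B R_0 lamS N_m N_f C_U x := by
  have h1α : (0:ℝ) < 1 - α := by linarith
  have hBy : (0:ℝ) < B - y := by linarith
  have hay : (0:ℝ) < (B - y) * R_0 / N_m := by positivity
  have hA : (B - y) * R_0 / N_m < (B - x) * R_0 / N_m := by
    have : B - y < B - x := by linarith
    gcongr
  have hP1 : ((B - x) * R_0 / N_m) ^ (-α) < ((B - y) * R_0 / N_m) ^ (-α) :=
    Real.rpow_lt_rpow_of_neg hay hA (by linarith)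
  have hnum : 0 < κ * lamS * x * R_0 + C_U := by
    have := mul_pos (mul_pos (mul_pos hκ hlamS) hx0) hR0
    linarith
  have hbx : (0:ℝ) < (κ * lamS * x * R_0 + C_U) / (κ * N_f) := by positivity
  have hbxy : (κ * lamS * x * R_0 + C_U) / (κ * N_f)
      < (κ * lamS * y * R_0 + C_U) / (κ * N_f) := by
    have : κ * lamS * x * R_0 < κ * lamS * y * R_0 := by
      have h := mul_pos (mul_pos hκ hlamS) hR0
      nlinarith
    gcongr
  have hP2 : ((κ * lamS * y * R_0 + C_U) / (κ * N_f)) ^ (-α)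
      < ((κ * lamS * x * R_0 + C_U) / (κ * N_f)) ^ (-α) :=
    Real.rpow_lt_rpow_of_neg hbx hbxy (by linarith)
  have hP3 : ((κ * lamS * y * R_0 + C_U) / (κ * N_f)) ^ (-α - 1)
      < ((κ * lamS * x * R_0 + C_U) / (κ * N_f)) ^ (-α - 1) :=
    Real.rpow_lt_rpow_of_neg hbx hbxy (by linarith)
  have hc1 : (0:ℝ) < (1 - α) * R_0 := by positivity
  have hc2 : (0:ℝ) < (1 - α) * lamS * R_0 := by positivity
  have hc3 : (0:ℝ) ≤ α * lamS * R_0 * C_U / (κ * N_f) := by positivity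
  have t1 := mul_lt_mul_of_pos_left hP1 hc1
  have t2 := mul_lt_mul_of_pos_left hP2 hc2
  have t3 := mul_le_mul_of_nonneg_left hP3.le hc3
  unfold Sd
  linarith

set_option maxHeartbeats 2000000 in
/-- with `C_U^th = β*·κ·λ_S·B̃_S·R_0` (where `β*` is the unique positive
root of `(1−α)(1+β)^(1+α) − β = 1−α` and `B̃_S = N_f·B/(N_f + N_m·λ_S^(1−1/α))`),
the revenue-optimal small-cell bandwidth satisfies:
(i) if `0 < C_U < C_U^th` then `B_S^rev > B̃_S`;
(ii) if `C_U > C_U^th` then `B_S^rev < B̃_S`. -/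
theorem stmt10 (α κ B R_0 lamS N_m N_f C_U βs Brev : ℝ)
    (hα0 : 0 < α) (hα1 : α < 1) (hκ : κ = α ^ (1 / (1 - α)))
    (hB : 0 < B) (hR0 : 0 < R_0) (hlamS : 0 < lamS) (hNm : 0 < N_m) (hNf : 0 < N_f)
    (hCU : 0 ≤ C_U)
    (hβs : 0 < βs) (hroot : (1 - α) * (1 + βs) ^ (1 + α) - βs = 1 - α)
    (hβuniq : ∀ β : ℝ, 0 < β → (1 - α) * (1 + β) ^ (1 + α) - β = 1 - α → β = βs)
    (hmem : Brev ∈ Icc (0 : ℝ) B)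
    (hmax : IsMaxOn (fun b : ℝ =>
        N_m * ((B - b) * R_0 / N_m) ^ (1 - α)
          + N_f * ((κ * lamS * b * R_0 + C_U) / (κ * N_f)) ^ (1 - α)
          - (C_U / κ) * ((κ * lamS * b * R_0 + C_U) / (κ * N_f)) ^ (-α)) (Icc 0 B) Brev) :
    (0 < C_U →
      C_U < βs * κ * lamS * (N_f * B / (N_f + N_m * lamS ^ (1 - 1 / α))) * R_0 →
      N_f * B / (N_f + N_m * lamS ^ (1 - 1 / α)) < Brev) ∧
    (βs * κ * lamS * (N_f * B / (N_f + N_m * lamS ^ (1 - 1 / α))) * R_0 < C_U →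
      Brev < N_f * B / (N_f + N_m * lamS ^ (1 - 1 / α))) := by
  have hmax' : IsMaxOn (Sf α κ B R_0 lamS N_m N_f C_U) (Icc 0 B) Brev := hmax
  have h1α : (0:ℝ) < 1 - α := by linarith
  have hκpos : 0 < κ := hκ ▸ Real.rpow_pos_of_pos hα0 _
  set L : ℝ := lamS ^ (1 - 1 / α) with hLdef
  have hLpos : 0 < L := Real.rpow_pos_of_pos hlamS _
  set D : ℝ := N_f + N_m * L with hDdef
  have hDpos : 0 < D := by positivity
  set T : ℝ := N_f * B / D with hTdef
  have hT0 : 0 < T := by positivity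
  have hTB : T < B := by
    rw [hTdef, div_lt_iff₀ hDpos]
    nlinarith [mul_pos hNm hLpos]
  have hden : 0 < κ * lamS * T * R_0 := by positivity
  set β : ℝ := C_U / (κ * lamS * T * R_0) with hβdef
  set r0 : ℝ := lamS * B * R_0 / D with hr0def
  have hr0 : 0 < r0 := by positivity
  have hβ0 : 0 ≤ β := by positivity
  have h1β : (0:ℝ) < 1 + β := by linarith
  have hCUeq : C_U = β * (κ * lamS * T * R_0) := by
    rw [hβdef, div_mul_cancel₀ _ hden.ne']
  set X : ℝ := r0 ^ (-α) with hXdef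
  have hX : 0 < X := Real.rpow_pos_of_pos hr0 _
  set Y : ℝ := (1 + β) ^ (-α) with hYdef
  set Z : ℝ := (1 + β) ^ (-α - 1) with hZdef
  set W : ℝ := (1 + β) ^ (1 + α) with hWdef
  have hW : 0 < W := Real.rpow_pos_of_pos h1β _
  have hYW : Y * W = 1 + β := by
    rw [hYdef, hWdef, ← Real.rpow_add h1β, show -α + (1 + α) = (1:ℝ) by ring, Real.rpow_one]
  have hZW : Z * W = 1 := by
    rw [hZdef, hWdef, ← Real.rpow_add h1β, show -α - 1 + (1 + α) = (0:ℝ) by ring, Real.rpow_zero]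
  -- base identities at T
  have hls : L = lamS * lamS ^ (-(1 / α)) := by
    rw [hLdef, show (1 : ℝ) - 1 / α = 1 + -(1 / α) by ring, Real.rpow_add hlamS, Real.rpow_one]
  have hBT : (B - T) * R_0 / N_m = lamS ^ (-(1 / α)) * r0 := by
    have h2 : B - T = B * (N_m * L) / D := by
      rw [hTdef, hDdef]
      field_simp
      ring
    rw [h2, hr0def, hls]
    field_simp
  have e1 : ((B - T) * R_0 / N_m) ^ (-α) = lamS * X := by
    rw [hBT, Real.mul_rpow (Real.rpow_pos_of_pos hlamS _).le hr0.le,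
      ← Real.rpow_mul hlamS.le, show -(1 / α) * -α = (1:ℝ) by field_simp, Real.rpow_one,
      ← hXdef]
  have e2 : (κ * lamS * T * R_0 + C_U) / (κ * N_f) = r0 * (1 + β) := by
    rw [hCUeq, hr0def, hTdef]
    field_simp
  have e2' : ((κ * lamS * T * R_0 + C_U) / (κ * N_f)) ^ (-α) = X * Y := by
    rw [e2, Real.mul_rpow hr0.le h1β.le, ← hXdef, ← hYdef]
  have e3 : ((κ * lamS * T * R_0 + C_U) / (κ * N_f)) ^ (-α - 1) = X / r0 * Z := by
    rw [e2, Real.mul_rpow hr0.le h1β.le, ← hZdef,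
      show -α - 1 = -α + -1 by ring, Real.rpow_add hr0, Real.rpow_neg_one, hXdef,
      div_eq_mul_inv]
  have e4 : α * lamS * R_0 * C_U / (κ * N_f) = α * lamS * R_0 * (β * r0) := by
    rw [hCUeq, hr0def, hTdef]
    field_simp
  have hSd : Sd α κ B R_0 lamS N_m N_f C_U T
      = lamS * R_0 * X * (-(1 - α) + (1 - α) * Y + α * β * Z) := by
    unfold Sd
    rw [e1, e2', e3, e4]
    field_simp
  have hkey : Sd α κ B R_0 lamS N_m N_f C_U T * W
      = lamS * R_0 * X * ((1 - α) + β - (1 - α) * W) := by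
    rw [hSd]
    linear_combination (lamS * R_0 * X * (1 - α)) * hYW + (lamS * R_0 * X * α * β) * hZW
  have hQ : (1 - α) * (1 + βs) ^ (1 + α) = 1 - α + βs := by linarith
  have hconv := strictConvexOn_rpow (show (1:ℝ) < 1 + α by linarith)
  -- sign claims for f(β) = (1-α) + β - (1-α) W
  have claim1 : 0 < β → β < βs → 0 < (1 - α) + β - (1 - α) * W := by
    intro hb0 hbs
    have hxne : (1:ℝ) ≠ 1 + βs := by linarith
    have ha : 0 < (βs - β) / βs := div_pos (by linarith) hβs
    have hb : 0 < β / βs := div_pos hb0 hβs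
    have hab : (βs - β) / βs + β / βs = 1 := by field_simp; ring
    have key := hconv.2 (mem_Ici.mpr (by norm_num : (0:ℝ) ≤ 1))
      (mem_Ici.mpr (by linarith : (0:ℝ) ≤ 1 + βs)) hxne ha hb hab
    simp only [smul_eq_mul] at key
    rw [Real.one_rpow] at key
    rw [show (βs - β) / βs * 1 + β / βs * (1 + βs) = 1 + β by field_simp; ring] at key
    have key2 : βs * (1 + β) ^ (1 + α) < (βs - β) + β * (1 + βs) ^ (1 + α) := by
      have h := mul_lt_mul_of_pos_left key hβs
      have hexp : βs * ((βs - β) / βs * 1 + β / βs * (1 + βs) ^ (1 + α))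
          = (βs - β) + β * (1 + βs) ^ (1 + α) := by
        field_simp
      linarith [h, hexp]
    have hmul2 := mul_lt_mul_of_pos_left key2 h1α
    have hQβ : (1 - α) * (β * (1 + βs) ^ (1 + α)) = β * (1 - α + βs) := by
      linear_combination β * hQ
    rw [hWdef]
    by_contra hcon'
    push_neg at hcon'
    have h5 := mul_le_mul_of_nonneg_left
      (show (1 - α) + β ≤ (1 - α) * (1 + β) ^ (1 + α) by linarith) hβs.le
    linarith [hmul2, hQβ, h5]
  have claim2 : βs < β → (1 - α) + β - (1 - α) * W < 0 := by
    intro hbs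
    have hb0 : 0 < β := lt_trans hβs hbs
    have hxne : (1:ℝ) ≠ 1 + β := by linarith
    have ha : 0 < (β - βs) / β := div_pos (by linarith) hb0
    have hb : 0 < βs / β := div_pos hβs hb0
    have hab : (β - βs) / β + βs / β = 1 := by field_simp; ring
    have key := hconv.2 (mem_Ici.mpr (by norm_num : (0:ℝ) ≤ 1))
      (mem_Ici.mpr (by linarith : (0:ℝ) ≤ 1 + β)) hxne ha hb hab
    simp only [smul_eq_mul] at key
    rw [Real.one_rpow] at key
    rw [show (β - βs) / β * 1 + βs / β * (1 + β) = 1 + βs by field_simp; ring] at key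
    have key2 : β * (1 + βs) ^ (1 + α) < (β - βs) + βs * (1 + β) ^ (1 + α) := by
      have h := mul_lt_mul_of_pos_left key hb0
      have hexp : β * ((β - βs) / β * 1 + βs / β * (1 + β) ^ (1 + α))
          = (β - βs) + βs * (1 + β) ^ (1 + α) := by
        field_simp
      linarith [h, hexp]
    have hmul2 := mul_lt_mul_of_pos_left key2 h1α
    have hQβ : (1 - α) * (β * (1 + βs) ^ (1 + α)) = β * (1 - α + βs) := by
      linear_combination β * hQ
    rw [hWdef]
    by_contra hcon'
    push_neg at hcon'
    have h5 := mul_le_mul_of_nonneg_left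
      (show (1 - α) * (1 + β) ^ (1 + α) ≤ (1 - α) + β by linarith) hβs.le
    linarith [hmul2, hQβ, h5]
  -- endgame
  have hcont := Sf_contOn α κ B R_0 lamS N_m N_f C_U hα1 hκpos hR0 hlamS hNf
  have hderiv : ∀ x, 0 < x → x < B → 0 < C_U →
      HasDerivAt (Sf α κ B R_0 lamS N_m N_f C_U) (Sd α κ B R_0 lamS N_m N_f C_U x) x := by
    intro x hx0 hxB hCU0
    refine Sf_hasDerivAt α κ B R_0 lamS N_m N_f C_U x hα0 hα1 hκpos hR0 hNm hNf
      (by linarith) ?_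
    have := mul_pos (mul_pos (mul_pos hκpos hlamS) hx0) hR0
    linarith
  constructor
  · -- case (i)
    intro hCU0 hth
    have hβlt : β < βs := by
      rw [hβdef, div_lt_iff₀ hden]
      have : βs * (κ * lamS * T * R_0) = βs * κ * lamS * T * R_0 := by ring
      linarith
    have hβpos : 0 < β := by rw [hβdef]; exact div_pos hCU0 hden
    have hf := claim1 hβpos hβlt
    have hSdTpos : 0 < Sd α κ B R_0 lamS N_m N_f C_U T := by
      have hprod : 0 < Sd α κ B R_0 lamS N_m N_f C_U T * W := by
        rw [hkey]
        exact mul_pos (mul_pos (mul_pos hlamS hR0) hX) hf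
      by_contra h
      push_neg at h
      have := mul_nonpos_iff.mpr (Or.inr ⟨h, hW.le⟩)
      linarith
    by_contra hcon
    push_neg at hcon
    rcases eq_or_lt_of_le hcon with heq | hlt
    · have hnh : Icc (0:ℝ) B ∈ nhds Brev := by rw [heq]; exact Icc_mem_nhds hT0 hTB
      have hloc := hmax'.isLocalMax hnh
      have hd := hderiv Brev (by rw [heq]; exact hT0) (by rw [heq]; exact hTB) hCU0
      have hz := hloc.hasDerivAt_eq_zero hd
      rw [heq] at hz
      linarith
    · have hmono : StrictMonoOn (Sf α κ B R_0 lamS N_m N_f C_U) (Icc 0 T) := by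
        apply strictMonoOn_of_deriv_pos (convex_Icc 0 T)
          ((hcont hCU0).mono (Icc_subset_Icc le_rfl hTB.le))
        intro x hx
        rw [interior_Icc] at hx
        rw [(hderiv x hx.1 (lt_trans hx.2 hTB) hCU0).deriv]
        exact lt_trans hSdTpos
          (Sd_strictAnti α κ B R_0 lamS N_m N_f C_U x T hα0 hα1 hκpos hR0 hNm hNf hlamS
            hCU hx.1 hx.2 hTB)
      have h1 := hmono ⟨hmem.1, hcon⟩ ⟨hT0.le, le_rfl⟩ hlt
      have h2 := isMaxOn_iff.mp hmax' T ⟨hT0.le, hTB.le⟩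
      exact absurd h2 (not_le.mpr h1)
  · -- case (ii)
    intro hth
    have hCU0 : 0 < C_U := lt_trans (by positivity) hth
    have hβgt : βs < β := by
      rw [hβdef, lt_div_iff₀ hden]
      have : βs * (κ * lamS * T * R_0) = βs * κ * lamS * T * R_0 := by ring
      linarith
    have hf := claim2 hβgt
    have hSdTneg : Sd α κ B R_0 lamS N_m N_f C_U T < 0 := by
      have hprod : Sd α κ B R_0 lamS N_m N_f C_U T * W < 0 := by
        rw [hkey]
        exact mul_neg_of_pos_of_neg (mul_pos (mul_pos hlamS hR0) hX) hf
      by_contra h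
      push_neg at h
      have := mul_nonneg h hW.le
      linarith
    by_contra hcon
    push_neg at hcon
    rcases eq_or_lt_of_le hcon with heq | hlt
    · have hnh : Icc (0:ℝ) B ∈ nhds Brev := by rw [← heq]; exact Icc_mem_nhds hT0 hTB
      have hloc := hmax'.isLocalMax hnh
      have hd := hderiv Brev (by rw [← heq]; exact hT0) (by rw [← heq]; exact hTB) hCU0
      have hz := hloc.hasDerivAt_eq_zero hd
      rw [← heq] at hz
      linarith
    · have hanti : StrictAntiOn (Sf α κ B R_0 lamS N_m N_f C_U) (Icc T B) := by
        apply strictAntiOn_of_deriv_neg (convex_Icc T B)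
          ((hcont hCU0).mono (Icc_subset_Icc hT0.le le_rfl))
        intro x hx
        rw [interior_Icc] at hx
        rw [(hderiv x (lt_trans hT0 hx.1) hx.2 hCU0).deriv]
        exact lt_trans
          (Sd_strictAnti α κ B R_0 lamS N_m N_f C_U T x hα0 hα1 hκpos hR0 hNm hNf hlamS
            hCU hT0 hx.1 hx.2) hSdTneg
      have h1 := hanti ⟨le_rfl, hTB.le⟩ ⟨hcon, hmem.2⟩ hlt
      have h2 := isMaxOn_iff.mp hmax' T ⟨hT0.le, hTB.le⟩
      exact absurd h2 (not_le.mpr h1)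
end

section
/- Let α ∈ (0,1), κ = α^{1/(1-α)}, and let B, R_0, λ_S, N_m, N_f > 0. For C_U ≥ 0 let S(B_S; C_U) = N_m·((B−B_S)R_0/N_m)^{1-α} + N_f·R_S^{1-α} − (C_U/κ)·R_S^{-α} with R_S = (κλ_S B_S R_0 + C_U)/(κN_f). Then for every C_U > 0, the maximum of S(·; C_U) over [0, B] is strictly less than the maximum of S(·; 0) over [0, B]; i.e., the monopolist's optimal revenue with unlicensed spectrum is always strictly less than without it. -/
open Real Set

/-- Auxiliary: the separate-service revenue function. -/
private noncomputable def Srev (α κ B R_0 lamS N_m N_f C : ℝ) (b : ℝ) : ℝ :=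
  N_m * ((B - b) * R_0 / N_m) ^ (1 - α)
    + N_f * ((κ * lamS * b * R_0 + C) / (κ * N_f)) ^ (1 - α)
    - (C / κ) * ((κ * lamS * b * R_0 + C) / (κ * N_f)) ^ (-α)

/-- Tangent-line (concavity) bound for `x ^ p` with `0 ≤ p ≤ 1`. -/
private lemma tangent_aux {p x z : ℝ} (hp0 : 0 ≤ p) (hp1 : p ≤ 1) (hz : 0 < z) (hxz : z ≤ x) :
    x ^ p ≤ z ^ p + p * z ^ (p - 1) * (x - z) := by
  have hx : 0 < x := lt_of_lt_of_le hz hxz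
  have hs : (0:ℝ) ≤ x / z - 1 := by
    have h1 : (1:ℝ) ≤ x / z := (one_le_div hz).mpr hxz
    linarith
  have hber := rpow_one_add_le_one_add_mul_self (s := x / z - 1) (by linarith) hp0 hp1
  have h1 : (1 + (x / z - 1)) = x / z := by ring
  rw [h1] at hber
  have hzp : (0:ℝ) < z ^ p := Real.rpow_pos_of_pos hz p
  have hzx : z * (x / z) = x := by field_simp
  have hxp : x ^ p = z ^ p * (x / z) ^ p := by
    rw [← Real.mul_rpow hz.le (div_nonneg hx.le hz.le), hzx]
  have h2 : z ^ p * (x / z) ^ p ≤ z ^ p * (1 + p * (x / z - 1)) :=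
    mul_le_mul_of_nonneg_left hber hzp.le
  have hz1 : z ^ (p - 1) = z ^ p / z := by
    rw [Real.rpow_sub hz, Real.rpow_one]
  have h3 : z ^ p * (1 + p * (x / z - 1)) = z ^ p + p * z ^ (p - 1) * (x - z) := by
    rw [hz1]; field_simp
  rw [hxp]
  linarith

/-- for every `C_U > 0`, the maximum of the separate-service revenue
`S(·; C_U)` over `[0, B]` is strictly less than the maximum of `S(·; 0)` over `[0, B]`:
the monopolist's optimal revenue with unlicensed spectrum is strictly less than without. -/
theorem stmt11 (α κ B R_0 lamS N_m N_f C_U : ℝ)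
    (hα0 : 0 < α) (hα1 : α < 1) (hκ : κ = α ^ (1 / (1 - α)))
    (hB : 0 < B) (hR0 : 0 < R_0) (hlamS : 0 < lamS) (hNm : 0 < N_m) (hNf : 0 < N_f)
    (hCU : 0 < C_U) :
    ∀ xC x0 : ℝ, xC ∈ Icc (0 : ℝ) B → x0 ∈ Icc (0 : ℝ) B →
      IsMaxOn (fun b : ℝ =>
          N_m * ((B - b) * R_0 / N_m) ^ (1 - α)
            + N_f * ((κ * lamS * b * R_0 + C_U) / (κ * N_f)) ^ (1 - α)
            - (C_U / κ) * ((κ * lamS * b * R_0 + C_U) / (κ * N_f)) ^ (-α)) (Icc 0 B) xC →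
      IsMaxOn (fun b : ℝ =>
          N_m * ((B - b) * R_0 / N_m) ^ (1 - α)
            + N_f * ((κ * lamS * b * R_0 + 0) / (κ * N_f)) ^ (1 - α)
            - (0 / κ) * ((κ * lamS * b * R_0 + 0) / (κ * N_f)) ^ (-α)) (Icc 0 B) x0 →
      N_m * ((B - xC) * R_0 / N_m) ^ (1 - α)
          + N_f * ((κ * lamS * xC * R_0 + C_U) / (κ * N_f)) ^ (1 - α)
          - (C_U / κ) * ((κ * lamS * xC * R_0 + C_U) / (κ * N_f)) ^ (-α)
        < N_m * ((B - x0) * R_0 / N_m) ^ (1 - α)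
            + N_f * ((κ * lamS * x0 * R_0 + 0) / (κ * N_f)) ^ (1 - α)
            - (0 / κ) * ((κ * lamS * x0 * R_0 + 0) / (κ * N_f)) ^ (-α) := by
  intro xC x0 hxC hx0 hmC hm0
  have hκ0 : 0 < κ := by rw [hκ]; exact Real.rpow_pos_of_pos hα0 _
  have hp0 : (0:ℝ) < 1 - α := by linarith
  show Srev α κ B R_0 lamS N_m N_f C_U xC < Srev α κ B R_0 lamS N_m N_f 0 x0
  have hm0' : ∀ b ∈ Icc (0:ℝ) B, Srev α κ B R_0 lamS N_m N_f 0 b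
      ≤ Srev α κ B R_0 lamS N_m N_f 0 x0 := fun b hb => hm0 hb
  -- key algebraic identity for the small-cell part of the revenue
  have key : ∀ A C : ℝ, 0 < A + C →
      N_f * ((A + C) / (κ * N_f)) ^ (1 - α) - (C / κ) * ((A + C) / (κ * N_f)) ^ (-α)
        = (A / κ) * ((A + C) / (κ * N_f)) ^ (-α) := by
    intro A C hAC
    have hR : 0 < (A + C) / (κ * N_f) := by positivity
    have h1 : ((A + C) / (κ * N_f)) ^ (1 - α)
        = ((A + C) / (κ * N_f)) * ((A + C) / (κ * N_f)) ^ (-α) := by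
      rw [show (1 - α) = 1 + (-α) by ring,
        Real.rpow_one_add' hR.le (by rw [show (1:ℝ) + -α = 1 - α by ring]; exact ne_of_gt hp0)]
    rw [h1]
    have h2 : N_f * (((A + C) / (κ * N_f)) * ((A + C) / (κ * N_f)) ^ (-α))
        - (C / κ) * ((A + C) / (κ * N_f)) ^ (-α)
        = (N_f * ((A + C) / (κ * N_f)) - C / κ) * ((A + C) / (κ * N_f)) ^ (-α) := by ring
    rw [h2]
    have h3 : N_f * ((A + C) / (κ * N_f)) - C / κ = A / κ := by
      field_simp
      ring
    rw [h3]
  -- pointwise strict comparison for b > 0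
  have pointwise : ∀ b : ℝ, 0 < b →
      Srev α κ B R_0 lamS N_m N_f C_U b < Srev α κ B R_0 lamS N_m N_f 0 b := by
    intro b hb
    have hA : 0 < κ * lamS * b * R_0 := by positivity
    have e1 := key (κ * lamS * b * R_0) C_U (by positivity)
    have e2 := key (κ * lamS * b * R_0) 0 (by positivity)
    have hR1 : 0 < (κ * lamS * b * R_0 + 0) / (κ * N_f) := by positivity
    have hd : 0 < κ * N_f := by positivity
    have hlt : (κ * lamS * b * R_0 + 0) / (κ * N_f)
        < (κ * lamS * b * R_0 + C_U) / (κ * N_f) := by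
      rw [div_lt_div_iff₀ hd hd]
      nlinarith
    have hrp := Real.rpow_lt_rpow_of_neg hR1 hlt (by linarith : -α < 0)
    have hAκ : 0 < κ * lamS * b * R_0 / κ := by positivity
    have hmul := mul_lt_mul_of_pos_left hrp hAκ
    unfold Srev
    linarith
  -- at b = 0 the two revenues coincide
  have zeroeq : Srev α κ B R_0 lamS N_m N_f C_U 0 = Srev α κ B R_0 lamS N_m N_f 0 0 := by
    have e := key (κ * lamS * 0 * R_0) C_U (by simpa using hCU)
    unfold Srev
    rw [show κ * lamS * 0 * R_0 = 0 by ring] at e ⊢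
    simp only [zero_add, add_zero, zero_div, zero_mul, sub_zero] at e ⊢
    rw [Real.zero_rpow (ne_of_gt hp0)]
    linarith
  -- explicit formula for the C = 0 revenue
  set c : ℝ := lamS * R_0 / N_f with hc
  have hcpos : 0 < c := by positivity
  have hgen : ∀ b : ℝ, 0 ≤ b → Srev α κ B R_0 lamS N_m N_f 0 b
      = N_m * ((B - b) * R_0 / N_m) ^ (1 - α) + N_f * c ^ (1 - α) * b ^ (1 - α) := by
    intro b hb
    unfold Srev
    have h1 : (κ * lamS * b * R_0 + 0) / (κ * N_f) = c * b := by
      rw [hc]; field_simp; ring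
    rw [h1, Real.mul_rpow hcpos.le hb]
    simp only [zero_div, zero_mul, sub_zero]
    ring
  have hzero0 : Srev α κ B R_0 lamS N_m N_f 0 0
      = N_m * (B * R_0 / N_m) ^ (1 - α) := by
    rw [hgen 0 le_rfl, Real.zero_rpow (ne_of_gt hp0)]
    ring_nf
  -- there is a point b1 where the C = 0 revenue strictly exceeds its value at 0
  obtain ⟨b1, hb1mem, hb1⟩ : ∃ b1 ∈ Icc (0:ℝ) B,
      Srev α κ B R_0 lamS N_m N_f 0 0 < Srev α κ B R_0 lamS N_m N_f 0 b1 := by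
    set X : ℝ := B * R_0 / N_m with hX
    have hXpos : 0 < X := by positivity
    set K' : ℝ := N_f * c ^ (1 - α) with hK'
    have hK'pos : 0 < K' := by positivity
    set K : ℝ := (1 - α) * (X / 2) ^ ((1 - α) - 1) * R_0 with hK
    have hKpos : 0 < K := by positivity
    set b1 : ℝ := min (B / 2) ((K' / (K + 1)) ^ (1 / α)) with hb1
    have hb1pos : 0 < b1 :=
      lt_min (by positivity) (Real.rpow_pos_of_pos (by positivity) _)
    have hb1le : b1 ≤ B / 2 := min_le_left _ _
    have hb1B : b1 ≤ B := by linarith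
    refine ⟨b1, ⟨hb1pos.le, hb1B⟩, ?_⟩
    have hb1α : b1 ^ α ≤ K' / (K + 1) := by
      have h1 : b1 ^ α ≤ ((K' / (K + 1)) ^ (1 / α)) ^ α :=
        Real.rpow_le_rpow hb1pos.le (min_le_right _ _) hα0.le
      have h2 : ((K' / (K + 1)) ^ (1 / α)) ^ α = K' / (K + 1) := by
        rw [← Real.rpow_mul (by positivity), one_div,
          inv_mul_cancel₀ (ne_of_gt hα0), Real.rpow_one]
      rw [h2] at h1; exact h1
    -- macro-cell loss bound
    have hzge : X / 2 ≤ (B - b1) * R_0 / N_m := by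
      have h1 : B / 2 ≤ B - b1 := by linarith
      rw [show X / 2 = B / 2 * R_0 / N_m from by rw [hX]; ring]
      gcongr
    have hzpos : 0 < (B - b1) * R_0 / N_m := lt_of_lt_of_le (by positivity) hzge
    have hzleX : (B - b1) * R_0 / N_m ≤ X := by
      rw [hX]
      gcongr
      linarith
    have htan := tangent_aux hp0.le (by linarith : (1:ℝ) - α ≤ 1) hzpos hzleX
    have hzexp : ((B - b1) * R_0 / N_m) ^ ((1 - α) - 1) ≤ (X / 2) ^ ((1 - α) - 1) :=
      (Real.rpow_le_rpow_iff_of_neg hzpos (by positivity)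
        (by linarith : (1 - α) - 1 < 0)).mpr hzge
    have hXz : X - (B - b1) * R_0 / N_m = b1 * R_0 / N_m := by
      rw [hX]; ring
    have hloss : N_m * (X ^ (1 - α) - ((B - b1) * R_0 / N_m) ^ (1 - α)) ≤ K * b1 := by
      have h1 : X ^ (1 - α) - ((B - b1) * R_0 / N_m) ^ (1 - α)
          ≤ (1 - α) * ((B - b1) * R_0 / N_m) ^ ((1 - α) - 1) * (b1 * R_0 / N_m) := by
        rw [← hXz]; linarith
      have h2 : (1 - α) * ((B - b1) * R_0 / N_m) ^ ((1 - α) - 1) * (b1 * R_0 / N_m)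
          ≤ (1 - α) * (X / 2) ^ ((1 - α) - 1) * (b1 * R_0 / N_m) := by
        have hbR : 0 ≤ b1 * R_0 / N_m := by positivity
        have := mul_le_mul_of_nonneg_left hzexp hp0.le
        exact mul_le_mul_of_nonneg_right this hbR
      have h3 : N_m * ((1 - α) * (X / 2) ^ ((1 - α) - 1) * (b1 * R_0 / N_m)) = K * b1 := by
        rw [hK]; field_simp
      calc N_m * (X ^ (1 - α) - ((B - b1) * R_0 / N_m) ^ (1 - α))
          ≤ N_m * ((1 - α) * (X / 2) ^ ((1 - α) - 1) * (b1 * R_0 / N_m)) :=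
            mul_le_mul_of_nonneg_left (le_trans h1 h2) hNm.le
        _ = K * b1 := h3
    -- gain beats loss
    have hb1p : 0 < b1 ^ (1 - α) := Real.rpow_pos_of_pos hb1pos _
    have hsplit : b1 ^ α * b1 ^ (1 - α) = b1 := by
      rw [← Real.rpow_add hb1pos, show α + (1 - α) = 1 by ring, Real.rpow_one]
    have hKb : K * b1 < K' * b1 ^ (1 - α) := by
      have h1 : K * b1 = K * b1 ^ α * b1 ^ (1 - α) := by
        calc K * b1 = K * (b1 ^ α * b1 ^ (1 - α)) := by rw [hsplit]
          _ = K * b1 ^ α * b1 ^ (1 - α) := by ring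
      have h2 : K * b1 ^ α ≤ K * (K' / (K + 1)) :=
        mul_le_mul_of_nonneg_left hb1α hKpos.le
      have h3 : K * (K' / (K + 1)) < K' := by
        have h4 : K * (K' / (K + 1)) = K' * (K / (K + 1)) := by ring
        have h5 : K / (K + 1) < 1 := by
          rw [div_lt_one (by linarith)]; linarith
        calc K * (K' / (K + 1)) = K' * (K / (K + 1)) := h4
          _ < K' * 1 := mul_lt_mul_of_pos_left h5 hK'pos
          _ = K' := mul_one _
      calc K * b1 = K * b1 ^ α * b1 ^ (1 - α) := h1
        _ ≤ K * (K' / (K + 1)) * b1 ^ (1 - α) := mul_le_mul_of_nonneg_right h2 hb1p.le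
        _ < K' * b1 ^ (1 - α) := mul_lt_mul_of_pos_right h3 hb1p
    rw [hzero0, hgen b1 hb1pos.le]
    have : N_m * X ^ (1 - α) - N_m * ((B - b1) * R_0 / N_m) ^ (1 - α) < K' * b1 ^ (1 - α) := by
      nlinarith
    linarith
  -- conclude
  rcases eq_or_lt_of_le hxC.1 with h0 | h0
  · rw [← h0, zeroeq]
    exact lt_of_lt_of_le hb1 (hm0' b1 hb1mem)
  · exact lt_of_lt_of_le (pointwise xC h0) (hm0' xC hxC)
end

section
/- Let α ∈ (0,1), κ = α^{1/(1-α)}, and let B, R_0, λ_S, N_m, N_f > 0 and C_U > 0. Define R_M(B_S) = (B − B_S)R_0/N_m, R_S(B_S) = (κλ_S B_S R_0 + C_U)/(κN_f), and the separate-service social welfare SW(B_S) = N_m·u(R_M(B_S)) + N_f·u(R_S(B_S)) − (C_U/κ)·R_S(B_S)^{-α} for B_S ∈ [0, B]. Then SW is strictly concave on [0, B], hence has a unique maximizer B_S^{sw}; moreover B_S^{sw} > 0 if and only if C_U < C_U^{sw}, where C_U^{sw} = κ·N_f·B·R_0·((α+1)·λ_S)^{1/α}/N_m. -/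
open Real Set
open Filter Topology


lemma aux_congr {s : Set ℝ} {f g : ℝ → ℝ} (hf : StrictConcaveOn ℝ s f)
    (h : ∀ x ∈ s, f x = g x) : StrictConcaveOn ℝ s g := by
  refine ⟨hf.1, fun x hx y hy hxy a b ha hb hab => ?_⟩
  rw [← h x hx, ← h y hy, ← h _ (hf.1 hx hy ha.le hb.le hab)]
  exact hf.2 hx hy hxy ha hb hab

lemma aux_smul {s : Set ℝ} {f : ℝ → ℝ} (hf : StrictConcaveOn ℝ s f) {k : ℝ} (hk : 0 < k) :
    StrictConcaveOn ℝ s fun x => k * f x := by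
  refine ⟨hf.1, fun x hx y hy hxy a b ha hb hab => ?_⟩
  have := hf.2 hx hy hxy ha hb hab
  simp only [smul_eq_mul] at this ⊢
  nlinarith

lemma aux_smul_cvx {s : Set ℝ} {f : ℝ → ℝ} (hf : ConvexOn ℝ s f) {k : ℝ} (hk : 0 ≤ k) :
    ConvexOn ℝ s fun x => k * f x := by
  refine ⟨hf.1, fun x hx y hy a b ha hb hab => ?_⟩
  have := hf.2 hx hy ha hb hab
  simp only [smul_eq_mul] at this ⊢
  nlinarith

lemma aux_affine {t : Set ℝ} {f : ℝ → ℝ} (hf : StrictConcaveOn ℝ t f) {s : Set ℝ}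
    (hs : Convex ℝ s) {g : ℝ → ℝ} {m c : ℝ} (hm : m ≠ 0) (hg : ∀ x, g x = m * x + c)
    (hmap : ∀ x ∈ s, g x ∈ t) : StrictConcaveOn ℝ s fun x => f (g x) := by
  refine ⟨hs, fun x hx y hy hxy a b ha hb hab => ?_⟩
  have h1 : g (a • x + b • y) = a • g x + b • g y := by
    simp only [hg, smul_eq_mul]; linear_combination (-c) * hab
  have h2 : g x ≠ g y := by
    simp only [hg]; intro h; exact hxy (mul_left_cancel₀ hm (by linarith))
  dsimp only
  rw [h1]
  exact hf.2 (hmap x hx) (hmap y hy) h2 ha hb hab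

lemma aux_affine_cvx {t : Set ℝ} {f : ℝ → ℝ} (hf : ConvexOn ℝ t f) {s : Set ℝ}
    (hs : Convex ℝ s) {g : ℝ → ℝ} {m c : ℝ} (hg : ∀ x, g x = m * x + c)
    (hmap : ∀ x ∈ s, g x ∈ t) : ConvexOn ℝ s fun x => f (g x) := by
  refine ⟨hs, fun x hx y hy a b ha hb hab => ?_⟩
  have h1 : g (a • x + b • y) = a • g x + b • g y := by
    simp only [hg, smul_eq_mul]; linear_combination (-c) * hab
  dsimp only
  rw [h1]
  exact hf.2 (hmap x hx) (hmap y hy) ha hb hab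

lemma aux_rpow_neg_convex {p : ℝ} (hp : p < 0) :
    StrictConvexOn ℝ (Ioi 0) fun t : ℝ => t ^ p := by
  apply strictConvexOn_of_deriv2_pos (convex_Ioi 0)
  · exact fun x hx => (Real.continuousAt_rpow_const x p (Or.inl (ne_of_gt hx))).continuousWithinAt
  · rw [interior_Ioi]
    intro x hx
    rw [mem_Ioi] at hx
    have hev : deriv (fun t : ℝ => t ^ p) =ᶠ[nhds x] fun t => p * t ^ (p - 1) := by
      filter_upwards [eventually_gt_nhds hx] with t ht
      exact (Real.hasDerivAt_rpow_const (Or.inl ht.ne')).deriv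
    have h2 : deriv^[2] (fun t : ℝ => t ^ p) x = deriv (fun t => p * t ^ (p - 1)) x := by
      show deriv (deriv (fun t : ℝ => t ^ p)) x = _
      exact hev.deriv_eq
    rw [h2, deriv_const_mul _ (Real.hasDerivAt_rpow_const (p := p - 1) (Or.inl hx.ne')).differentiableAt,
      (Real.hasDerivAt_rpow_const (p := p - 1) (Or.inl hx.ne')).deriv]
    have h3 : (0:ℝ) < x ^ (p - 1 - 1) := Real.rpow_pos_of_pos hx _
    nlinarith [mul_pos (mul_pos_of_neg_of_neg hp (show p - 1 < 0 by linarith)) h3]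

set_option maxHeartbeats 1000000

/-- the separate-service social welfare
`SW(B_S) = N_m·u(R_M) + N_f·u(R_S) − (C_U/κ)·R_S^(-α)` is strictly concave on `[0, B]`,
hence has a unique maximizer `B_S^sw`; moreover `B_S^sw > 0` iff
`C_U < C_U^sw = κ·N_f·B·R_0·((α+1)·λ_S)^(1/α)/N_m`. -/
theorem stmt12 (α κ B R_0 lamS N_m N_f C_U : ℝ)
    (hα0 : 0 < α) (hα1 : α < 1) (hκ : κ = α ^ (1 / (1 - α)))
    (hB : 0 < B) (hR0 : 0 < R_0) (hlamS : 0 < lamS) (hNm : 0 < N_m) (hNf : 0 < N_f)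
    (hCU : 0 < C_U) :
    StrictConcaveOn ℝ (Icc 0 B)
      (fun B_S : ℝ =>
        N_m * (((B - B_S) * R_0 / N_m) ^ (1 - α) / (1 - α))
          + N_f * (((κ * lamS * B_S * R_0 + C_U) / (κ * N_f)) ^ (1 - α) / (1 - α))
          - (C_U / κ) * ((κ * lamS * B_S * R_0 + C_U) / (κ * N_f)) ^ (-α)) ∧
    (∃! x : ℝ, x ∈ Icc 0 B ∧
      IsMaxOn (fun B_S : ℝ =>
        N_m * (((B - B_S) * R_0 / N_m) ^ (1 - α) / (1 - α))
          + N_f * (((κ * lamS * B_S * R_0 + C_U) / (κ * N_f)) ^ (1 - α) / (1 - α))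
          - (C_U / κ) * ((κ * lamS * B_S * R_0 + C_U) / (κ * N_f)) ^ (-α)) (Icc 0 B) x) ∧
    (∀ x ∈ Icc (0 : ℝ) B,
      IsMaxOn (fun B_S : ℝ =>
        N_m * (((B - B_S) * R_0 / N_m) ^ (1 - α) / (1 - α))
          + N_f * (((κ * lamS * B_S * R_0 + C_U) / (κ * N_f)) ^ (1 - α) / (1 - α))
          - (C_U / κ) * ((κ * lamS * B_S * R_0 + C_U) / (κ * N_f)) ^ (-α)) (Icc 0 B) x →
      (0 < x ↔ C_U < κ * N_f * B * R_0 * ((α + 1) * lamS) ^ (1 / α) / N_m)) := by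
  have h1α : (0:ℝ) < 1 - α := by linarith
  have h1α' : (1:ℝ) - α ≠ 0 := h1α.ne'
  have hκpos : 0 < κ := by rw [hκ]; positivity
  have hκ' : κ ≠ 0 := hκpos.ne'
  have hNm' : N_m ≠ 0 := hNm.ne'
  have hNf' : N_f ≠ 0 := hNf.ne'
  have hκNf : 0 < κ * N_f := mul_pos hκpos hNf
  have hκNf' : κ * N_f ≠ 0 := hκNf.ne'
  set F : ℝ → ℝ := fun B_S : ℝ =>
        N_m * (((B - B_S) * R_0 / N_m) ^ (1 - α) / (1 - α))
          + N_f * (((κ * lamS * B_S * R_0 + C_U) / (κ * N_f)) ^ (1 - α) / (1 - α))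
          - (C_U / κ) * ((κ * lamS * B_S * R_0 + C_U) / (κ * N_f)) ^ (-α) with hFdef
  have hSpos : ∀ x : ℝ, 0 ≤ x → 0 < (κ * lamS * x * R_0 + C_U) / (κ * N_f) := by
    intro x hx
    refine div_pos ?_ hκNf
    have : 0 ≤ κ * lamS * x * R_0 :=
      mul_nonneg (mul_nonneg (mul_nonneg hκpos.le hlamS.le) hx) hR0.le
    linarith
  -- Strict concavity
  have SC : StrictConcaveOn ℝ (Icc 0 B) F := by
    have houter1 : StrictConcaveOn ℝ (Ici (0:ℝ)) fun t : ℝ => (N_m / (1 - α)) * t ^ (1 - α) :=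
      aux_smul (Real.strictConcaveOn_rpow h1α (by linarith)) (by positivity)
    have P1 : StrictConcaveOn ℝ (Icc (0:ℝ) B)
        fun x : ℝ => (N_m / (1 - α)) * ((B - x) * R_0 / N_m) ^ (1 - α) := by
      refine aux_affine houter1 (convex_Icc 0 B) (m := -(R_0 / N_m)) (c := B * R_0 / N_m)
        (neg_ne_zero.2 (by positivity)) (fun x => by field_simp; ring) ?_
      intro x hx
      have : 0 ≤ B - x := by linarith [hx.2]
      exact mem_Ici.2 (by positivity)
    have houter2 : StrictConcaveOn ℝ (Ici (0:ℝ)) fun t : ℝ => (N_f / (1 - α)) * t ^ (1 - α) :=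
      aux_smul (Real.strictConcaveOn_rpow h1α (by linarith)) (by positivity)
    have P2 : StrictConcaveOn ℝ (Icc (0:ℝ) B)
        fun x : ℝ => (N_f / (1 - α)) * ((κ * lamS * x * R_0 + C_U) / (κ * N_f)) ^ (1 - α) := by
      refine aux_affine houter2 (convex_Icc 0 B) (m := lamS * R_0 / N_f) (c := C_U / (κ * N_f))
        (by positivity) (fun x => by field_simp) ?_
      exact fun x hx => mem_Ici.2 (hSpos x hx.1).le
    have houter3 : ConvexOn ℝ (Ioi (0:ℝ)) fun t : ℝ => (C_U / κ) * t ^ (-α) :=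
      aux_smul_cvx (aux_rpow_neg_convex (by linarith)).convexOn (by positivity)
    have P3 : ConvexOn ℝ (Icc (0:ℝ) B)
        fun x : ℝ => (C_U / κ) * ((κ * lamS * x * R_0 + C_U) / (κ * N_f)) ^ (-α) := by
      refine aux_affine_cvx houter3 (convex_Icc 0 B) (m := lamS * R_0 / N_f)
        (c := C_U / (κ * N_f)) (fun x => by field_simp) ?_
      exact fun x hx => mem_Ioi.2 (hSpos x hx.1)
    have SC' := (P1.add P2).add_concaveOn P3.neg
    refine aux_congr SC' ?_
    intro x hx
    simp only [Pi.add_apply, Pi.neg_apply, hFdef]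
    field_simp
    ring
  -- Continuity
  have hFcont : ContinuousOn F (Icc 0 B) := by
    rw [hFdef]
    apply ContinuousOn.sub
    · apply ContinuousOn.add
      · exact continuousOn_const.mul
          ((ContinuousOn.rpow_const (by fun_prop) fun x _ => Or.inr h1α.le).div_const _)
      · exact continuousOn_const.mul
          ((ContinuousOn.rpow_const (by fun_prop) fun x _ => Or.inr h1α.le).div_const _)
    · exact continuousOn_const.mul
        (ContinuousOn.rpow_const (by fun_prop) fun x hx => Or.inl (hSpos x hx.1).ne')
  obtain ⟨x₀, hx₀, hmax₀⟩ := isCompact_Icc.exists_isMaxOn (nonempty_Icc.2 hB.le) hFcont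
  refine ⟨SC, ⟨x₀, ⟨hx₀, hmax₀⟩, fun y hy => SC.eq_of_isMaxOn hy.2 hmax₀ hy.1 hx₀⟩, ?_⟩
  -- Part 3
  intro x hx hxmax
  set φ : ℝ → ℝ := fun y =>
      -(R_0 * ((B - y) * R_0 / N_m) ^ (-α))
        + lamS * R_0 * (((κ * lamS * y * R_0 + C_U) / (κ * N_f)) ^ (-α))
        + (α * C_U * lamS * R_0 / (κ * N_f)) *
            (((κ * lamS * y * R_0 + C_U) / (κ * N_f)) ^ (-α - 1)) with hφdef
  have hderiv : ∀ y : ℝ, 0 ≤ y → y < B → HasDerivAt F (φ y) y := by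
    intro y hy0 hyB
    have hb1 : (0:ℝ) < (B - y) * R_0 / N_m := by
      have : 0 < B - y := by linarith
      positivity
    have hb2 : 0 < (κ * lamS * y * R_0 + C_U) / (κ * N_f) := hSpos y hy0
    have d1 : HasDerivAt (fun z : ℝ => (B - z) * R_0 / N_m) (-(R_0 / N_m)) y := by
      have h := (((hasDerivAt_id y).const_sub B).mul_const R_0).div_const N_m
      exact h.congr_deriv (by ring)
    have d1' : HasDerivAt (fun z : ℝ => N_m * (((B - z) * R_0 / N_m) ^ (1 - α) / (1 - α)))
        (-(R_0 * ((B - y) * R_0 / N_m) ^ (-α))) y := by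
      have h := d1.rpow_const (p := 1 - α) (Or.inl hb1.ne')
      rw [show (1:ℝ) - α - 1 = -α by ring] at h
      have h2 := (h.div_const (1 - α)).const_mul N_m
      refine h2.congr_deriv ?_
      field_simp
    have d2 : HasDerivAt (fun z : ℝ => (κ * lamS * z * R_0 + C_U) / (κ * N_f))
        (κ * lamS * R_0 / (κ * N_f)) y := by
      have h := (((hasDerivAt_id y).const_mul (κ * lamS)).mul_const R_0).add_const C_U
      have h2 := h.div_const (κ * N_f)
      exact h2.congr_deriv (by ring)
    have d2' : HasDerivAt
        (fun z : ℝ => N_f * (((κ * lamS * z * R_0 + C_U) / (κ * N_f)) ^ (1 - α) / (1 - α)))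
        (lamS * R_0 * (((κ * lamS * y * R_0 + C_U) / (κ * N_f)) ^ (-α))) y := by
      have h := d2.rpow_const (p := 1 - α) (Or.inl hb2.ne')
      rw [show (1:ℝ) - α - 1 = -α by ring] at h
      have h2 := (h.div_const (1 - α)).const_mul N_f
      refine h2.congr_deriv ?_
      field_simp
    have d3' : HasDerivAt
        (fun z : ℝ => (C_U / κ) * (((κ * lamS * z * R_0 + C_U) / (κ * N_f)) ^ (-α)))
        ((C_U / κ) * (κ * lamS * R_0 / (κ * N_f) * (-α) *
          ((κ * lamS * y * R_0 + C_U) / (κ * N_f)) ^ (-α - 1))) y :=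
      (d2.rpow_const (p := -α) (Or.inl hb2.ne')).const_mul (C_U / κ)
    have key := (d1'.add d2').sub d3'
    rw [hFdef]
    refine key.congr_deriv ?_
    rw [hφdef]
    field_simp
    ring
  have s0pos : 0 < C_U / (κ * N_f) := div_pos hCU hκNf
  have m0pos : 0 < B * R_0 / N_m := by positivity
  have Lpos : 0 < (α + 1) * lamS := mul_pos (by linarith) hlamS
  have hφ0 : φ 0 = R_0 * ((α + 1) * lamS * (C_U / (κ * N_f)) ^ (-α) - (B * R_0 / N_m) ^ (-α)) := by
    have e1 : (κ * lamS * (0:ℝ) * R_0 + C_U) / (κ * N_f) = C_U / (κ * N_f) := by norm_num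
    have e2 : (B - (0:ℝ)) * R_0 / N_m = B * R_0 / N_m := by norm_num
    rw [hφdef]
    simp only [e1, e2]
    rw [show (-α - 1 : ℝ) = -α - 1 from rfl, Real.rpow_sub_one s0pos.ne' (-α)]
    field_simp
    ring
  have keyiff : 0 < φ 0 ↔ C_U < κ * N_f * B * R_0 * ((α + 1) * lamS) ^ (1 / α) / N_m := by
    have step0 : 0 < φ 0 ↔
        (B * R_0 / N_m) ^ (-α) < (α + 1) * lamS * (C_U / (κ * N_f)) ^ (-α) := by
      rw [hφ0]
      constructor <;> intro h <;> nlinarith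
    have step1 : (B * R_0 / N_m) ^ (-α) < (α + 1) * lamS * (C_U / (κ * N_f)) ^ (-α) ↔
        ((C_U / (κ * N_f)) / (B * R_0 / N_m)) ^ α < (α + 1) * lamS := by
      rw [Real.rpow_neg s0pos.le, ← div_eq_mul_inv,
        lt_div_iff₀ (Real.rpow_pos_of_pos s0pos α),
        show (B * R_0 / N_m) ^ (-α) * (C_U / (κ * N_f)) ^ α
            = ((C_U / (κ * N_f)) / (B * R_0 / N_m)) ^ α from by
          rw [Real.div_rpow s0pos.le m0pos.le, Real.rpow_neg m0pos.le, div_eq_mul_inv, mul_comm]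
          exact (div_eq_mul_inv _ _).symm]
    have step2 : ((C_U / (κ * N_f)) / (B * R_0 / N_m)) ^ α < (α + 1) * lamS ↔
        (C_U / (κ * N_f)) / (B * R_0 / N_m) < ((α + 1) * lamS) ^ (1 / α) := by
      rw [one_div, Real.lt_rpow_inv_iff_of_pos (div_nonneg s0pos.le m0pos.le) Lpos.le hα0]
    have step3 : (C_U / (κ * N_f)) / (B * R_0 / N_m) < ((α + 1) * lamS) ^ (1 / α) ↔
        C_U < κ * N_f * B * R_0 * ((α + 1) * lamS) ^ (1 / α) / N_m := by
      have heq : ((α + 1) * lamS) ^ (1 / α) * (B * R_0 / N_m) * (κ * N_f)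
          = κ * N_f * B * R_0 * ((α + 1) * lamS) ^ (1 / α) / N_m := by
        field_simp
      rw [div_lt_iff₀ m0pos, div_lt_iff₀ hκNf, heq]
    rw [step0, step1, step2, step3]
  have hmono : ∀ c : ℝ, 0 < c → c < B → φ c < φ 0 := by
    intro c hc0 hcB
    have hbc : (0:ℝ) < (B - c) * R_0 / N_m := by
      have : 0 < B - c := by linarith
      positivity
    have hb0 : (0:ℝ) < (B - 0) * R_0 / N_m := by norm_num; positivity
    have hS0 : 0 < (κ * lamS * (0:ℝ) * R_0 + C_U) / (κ * N_f) := hSpos 0 le_rfl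
    have i1 : (B - c) * R_0 / N_m < (B - 0) * R_0 / N_m := by
      exact (div_lt_div_iff_of_pos_right hNm).2 (by nlinarith)
    have i2 : (κ * lamS * (0:ℝ) * R_0 + C_U) / (κ * N_f)
        < (κ * lamS * c * R_0 + C_U) / (κ * N_f) := by
      refine (div_lt_div_iff_of_pos_right hκNf).2 ?_
      nlinarith [mul_pos (mul_pos (mul_pos hκpos hlamS) hc0) hR0]
    have hnegα : -α < 0 := by linarith
    have hnegα1 : -α - 1 < 0 := by linarith
    have j1 := Real.rpow_lt_rpow_of_neg hbc i1 hnegα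
    have j2 := Real.rpow_lt_rpow_of_neg hS0 i2 hnegα
    have j3 := Real.rpow_lt_rpow_of_neg hS0 i2 hnegα1
    have k1 := mul_lt_mul_of_pos_left j1 hR0
    have k2 := mul_lt_mul_of_pos_left j2 (mul_pos hlamS hR0)
    have kKpos : 0 < α * C_U * lamS * R_0 / (κ * N_f) := by positivity
    have k3 := mul_lt_mul_of_pos_left j3 kKpos
    rw [hφdef]
    dsimp only
    linarith
  constructor
  · intro hxpos
    by_contra hT
    have hφ0le : φ 0 ≤ 0 := by
      by_contra h
      push_neg at h
      exact hT (keyiff.1 h)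
    obtain ⟨c, hc, hceq⟩ := exists_hasDerivAt_eq_slope F φ hxpos
      (hFcont.mono (Icc_subset_Icc le_rfl hx.2))
      (fun c hc => hderiv c hc.1.le (lt_of_lt_of_le hc.2 hx.2))
    have hlt : φ c < φ 0 := hmono c hc.1 (lt_of_lt_of_le hc.2 hx.2)
    rw [eq_div_iff (by simpa using hxpos.ne' : x - 0 ≠ 0)] at hceq
    have hFlt : F x < F 0 := by nlinarith [mul_neg_of_neg_of_pos (by linarith : φ c < 0) hxpos]
    have := (isMaxOn_iff.1 hxmax) 0 (left_mem_Icc.2 hB.le)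
    linarith
  · intro hT
    have hφ0pos : 0 < φ 0 := keyiff.2 hT
    have hd0 : HasDerivAt F (φ 0) 0 := hderiv 0 le_rfl hB
    have hslope := hasDerivAt_iff_tendsto_slope.1 hd0
    have h1 : ∀ᶠ y in 𝓝[>] (0:ℝ), 0 < slope F 0 y := by
      have hmon : 𝓝[>] (0:ℝ) ≤ 𝓝[≠] (0:ℝ) :=
        nhdsWithin_mono _ (fun z hz => ne_of_gt hz)
      exact (hslope.mono_left hmon).eventually (eventually_gt_nhds hφ0pos)
    have h2 : ∀ᶠ y in 𝓝[>] (0:ℝ), y ∈ Ioo 0 B := Ioo_mem_nhdsGT_of_mem ⟨le_refl 0, hB⟩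
    obtain ⟨y, hy1, hy2⟩ := (h1.and h2).exists
    rw [slope_def_field] at hy1
    have hyF : F 0 < F y := by
      rw [div_pos_iff] at hy1
      rcases hy1 with ⟨h, _⟩ | ⟨_, h⟩ <;> [linarith; linarith [hy2.1]]
    rcases hx.1.lt_or_eq with h | h
    · exact h
    · exfalso
      have := (isMaxOn_iff.1 hxmax) y ⟨hy2.1.le, hy2.2.le⟩
      rw [← h] at this
      linarith
end

section
/- Let α ∈ (0,1), κ = α^{1/(1-α)}, and let B, R_0, λ_S, N_m, N_f > 0 and C_U > 0. Let B_S^{sw}(C_U) be the unique maximizer over [0, B] of the separate-service social welfare SW(B_S; C_U) = N_m·u((B−B_S)R_0/N_m) + N_f·u(R_S) − (C_U/κ)·R_S^{-α} with R_S = (κλ_S B_S R_0 + C_U)/(κN_f), and let B̃_S = N_f B/(N_f + N_m λ_S^{1−1/α}) be the maximizer when C_U = 0. Then for every C_U > 0, B_S^{sw}(C_U) < B̃_S: with unlicensed spectrum a welfare-maximizing monopolist always allocates strictly less bandwidth to small cells than without it. -/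
open Real Set

lemma key_ineq (α r d : ℝ) (hα0 : 0 < α) (hα1 : α < 1) (hr : 0 < r) (hd : 0 < d) :
    (r+d)^(-α) + α*d*(r+d)^(-α-1) < r^(-α) := by
  have ht : 0 < d/r := div_pos hd hr
  set t := d/r with htdef
  have h1t : 0 < 1 + t := by linarith
  have hdrt : d = r * t := by rw [htdef]; field_simp
  have hrd : r + d = r * (1+t) := by rw [hdrt]; ring
  have hbern : 1 + (1+α)*t < (1+t)^(1+α) :=
    one_add_mul_self_lt_rpow_one_add (by linarith) ht.ne' (by linarith)
  have hq : 0 < (1+t)^(-α-1) := Real.rpow_pos_of_pos h1t _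
  have hq1 : (1+t)^(-α) = (1+t)^(-α-1) * (1+t) := by
    calc (1+t)^(-α) = (1+t)^(-α-1+1) := by norm_num
      _ = (1+t)^(-α-1) * (1+t)^(1:ℝ) := Real.rpow_add h1t _ _
      _ = (1+t)^(-α-1) * (1+t) := by rw [Real.rpow_one]
  have hq2 : (1+t)^(-α-1) * (1+t)^(1+α) = 1 := by
    rw [← Real.rpow_add h1t, show (-α-1)+(1+α) = 0 by ring, Real.rpow_zero]
  have hlt : (1+t)^(-α-1) * (1 + (1+α)*t) < 1 := by
    calc (1+t)^(-α-1) * (1+(1+α)*t) < (1+t)^(-α-1) * (1+t)^(1+α) :=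
          mul_lt_mul_of_pos_left hbern hq
      _ = 1 := hq2
  have e2' : r^(-α-1) = r^(-α) * r⁻¹ := by
    rw [show -α-1 = -α - 1 by ring, Real.rpow_sub hr, Real.rpow_one, div_eq_mul_inv]
  have hrα : 0 < r^(-α) := Real.rpow_pos_of_pos hr _
  calc (r+d)^(-α) + α*d*(r+d)^(-α-1)
      = r^(-α) * ((1+t)^(-α-1) * (1 + (1+α)*t)) := by
        rw [hrd, Real.mul_rpow hr.le h1t.le, Real.mul_rpow hr.le h1t.le, hq1, e2']
        rw [hdrt]; field_simp; ring
    _ < r^(-α) * 1 := mul_lt_mul_of_pos_left hlt hrα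
    _ = r^(-α) := mul_one _

/-- for every `C_U > 0`, the welfare-optimal small-cell allocation
`B_S^sw(C_U)` is strictly less than the no-unlicensed optimum
`B̃_S = N_f·B/(N_f + N_m·λ_S^(1−1/α))`. -/
theorem stmt13 (α κ B R_0 lamS N_m N_f C_U Bsw : ℝ)
    (hα0 : 0 < α) (hα1 : α < 1) (hκ : κ = α ^ (1 / (1 - α)))
    (hB : 0 < B) (hR0 : 0 < R_0) (hlamS : 0 < lamS) (hNm : 0 < N_m) (hNf : 0 < N_f)
    (hCU : 0 < C_U)
    (hmem : Bsw ∈ Icc (0 : ℝ) B)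
    (hmax : IsMaxOn (fun B_S : ℝ =>
        N_m * (((B - B_S) * R_0 / N_m) ^ (1 - α) / (1 - α))
          + N_f * (((κ * lamS * B_S * R_0 + C_U) / (κ * N_f)) ^ (1 - α) / (1 - α))
          - (C_U / κ) * ((κ * lamS * B_S * R_0 + C_U) / (κ * N_f)) ^ (-α)) (Icc 0 B) Bsw) :
    Bsw < N_f * B / (N_f + N_m * lamS ^ (1 - 1 / α)) := by
  have h1α : 0 < 1 - α := by linarith
  have hκ0 : 0 < κ := hκ ▸ Real.rpow_pos_of_pos hα0 _
  set f : ℝ → ℝ := fun B_S : ℝ =>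
        N_m * (((B - B_S) * R_0 / N_m) ^ (1 - α) / (1 - α))
          + N_f * (((κ * lamS * B_S * R_0 + C_U) / (κ * N_f)) ^ (1 - α) / (1 - α))
          - (C_U / κ) * ((κ * lamS * B_S * R_0 + C_U) / (κ * N_f)) ^ (-α) with hfdef
  set φ : ℝ → ℝ := fun x =>
        lamS * R_0 * (((κ * lamS * x * R_0 + C_U) / (κ * N_f)) ^ (-α))
          + α * lamS * R_0 * C_U / (κ * N_f) * (((κ * lamS * x * R_0 + C_U) / (κ * N_f)) ^ (-α - 1))
          - R_0 * (((B - x) * R_0 / N_m) ^ (-α)) with hφdef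
  clear_value f φ
  have hLpos : 0 < lamS ^ (1 - 1/α) := Real.rpow_pos_of_pos hlamS _
  have hD : 0 < N_f + N_m * lamS ^ (1 - 1/α) := by positivity
  set Bt := N_f * B / (N_f + N_m * lamS ^ (1 - 1/α)) with hBtdef
  have hBt0 : 0 < Bt := by positivity
  have hBtB : Bt < B := by
    rw [hBtdef, div_lt_iff₀ hD]
    nlinarith [mul_pos hNm hLpos]
  clear_value Bt
  -- derivative of f
  have hderiv : ∀ x, 0 ≤ x → x < B → HasDerivAt f (φ x) x := by
    intro x hx0 hxB
    have hAx : 0 < (B - x) * R_0 / N_m := by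
      apply div_pos (mul_pos (by linarith) hR0) hNm
    have hRx : 0 < (κ * lamS * x * R_0 + C_U) / (κ * N_f) := by
      apply div_pos _ (mul_pos hκ0 hNf)
      have : 0 ≤ κ * lamS * x * R_0 := by positivity
      linarith
    have hA : HasDerivAt (fun y => (B - y) * R_0 / N_m) (-1 * R_0 / N_m) x :=
      (((hasDerivAt_id x).const_sub B).mul_const R_0).div_const N_m
    have hR : HasDerivAt (fun y => (κ * lamS * y * R_0 + C_U) / (κ * N_f))
        (κ * lamS * 1 * R_0 / (κ * N_f)) x :=
      ((((hasDerivAt_id x).const_mul (κ * lamS)).mul_const R_0).add_const C_U).div_const (κ * N_f)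
    have t1 : HasDerivAt (fun y => N_m * (((B - y) * R_0 / N_m) ^ (1 - α) / (1 - α)))
        (N_m * ((-1 * R_0 / N_m * (1 - α) * ((B - x) * R_0 / N_m) ^ (1 - α - 1)) / (1 - α))) x :=
      ((hA.rpow_const (Or.inl hAx.ne')).div_const (1 - α)).const_mul N_m
    have t2 : HasDerivAt (fun y => N_f * (((κ * lamS * y * R_0 + C_U) / (κ * N_f)) ^ (1 - α) / (1 - α)))
        (N_f * ((κ * lamS * 1 * R_0 / (κ * N_f) * (1 - α)
          * ((κ * lamS * x * R_0 + C_U) / (κ * N_f)) ^ (1 - α - 1)) / (1 - α))) x :=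
      ((hR.rpow_const (Or.inl hRx.ne')).div_const (1 - α)).const_mul N_f
    have t3 : HasDerivAt (fun y => (C_U / κ) * (((κ * lamS * y * R_0 + C_U) / (κ * N_f)) ^ (-α)))
        ((C_U / κ) * (κ * lamS * 1 * R_0 / (κ * N_f) * (-α)
          * ((κ * lamS * x * R_0 + C_U) / (κ * N_f)) ^ (-α - 1))) x :=
      (hR.rpow_const (Or.inl hRx.ne')).const_mul (C_U / κ)
    have htot := (t1.add t2).sub t3
    have hexp : (1 : ℝ) - α - 1 = -α := by ring
    rw [hexp] at htot
    rw [hfdef]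
    refine htot.congr_deriv ?_
    rw [hφdef]
    field_simp
    ring
  -- negativity of φ on [Bt, B)
  have hneg : ∀ x, Bt ≤ x → x < B → φ x < 0 := by
    intro x hxBt hxB
    have hx0 : 0 ≤ x := le_trans hBt0.le hxBt
    set r := lamS * Bt * R_0 / N_f with hrdef
    set d := C_U / (κ * N_f) with hddef
    have hr : 0 < r := by positivity
    have hd : 0 < d := by positivity
    clear_value r d
    have hrd : 0 < r + d := by linarith
    have hRsum : (κ * lamS * x * R_0 + C_U) / (κ * N_f) = lamS * x * R_0 / N_f + d := by
      rw [hddef]; field_simp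
    have hRge : r + d ≤ (κ * lamS * x * R_0 + C_U) / (κ * N_f) := by
      rw [hRsum, hrdef]
      have h1 : lamS * Bt * R_0 / N_f ≤ lamS * x * R_0 / N_f := by gcongr
      linarith
    have hAx : 0 < (B - x) * R_0 / N_m := div_pos (mul_pos (by linarith) hR0) hNm
    have hAle : (B - x) * R_0 / N_m ≤ (B - Bt) * R_0 / N_m := by
      gcongr
    have b1 : ((κ * lamS * x * R_0 + C_U) / (κ * N_f)) ^ (-α) ≤ (r+d)^(-α) :=
      Real.rpow_le_rpow_of_nonpos hrd hRge (by linarith)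
    have b2 : ((κ * lamS * x * R_0 + C_U) / (κ * N_f)) ^ (-α-1) ≤ (r+d)^(-α-1) :=
      Real.rpow_le_rpow_of_nonpos hrd hRge (by linarith)
    have b3 : ((B - Bt) * R_0 / N_m) ^ (-α) ≤ ((B - x) * R_0 / N_m) ^ (-α) :=
      Real.rpow_le_rpow_of_nonpos hAx hAle (by linarith)
    -- FOC identity at Bt
    have hsplit : lamS ^ ((1:ℝ) - 1/α) = lamS * lamS ^ (-(1/α)) := by
      rw [show (1:ℝ) - 1/α = 1 + -(1/α) by ring, Real.rpow_add hlamS, Real.rpow_one]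
    have hDne : N_f + N_m * (lamS * lamS ^ (-(1/α))) ≠ 0 := by
      rw [← hsplit]; exact hD.ne'
    have hABt : (B - Bt) * R_0 / N_m = lamS ^ (-(1/α)) * r := by
      rw [hrdef, hBtdef, hsplit]
      field_simp
      ring
    have hlpow : (lamS ^ (-(1/α))) ^ (-α) = lamS := by
      rw [← Real.rpow_mul hlamS.le, neg_mul_neg, one_div, inv_mul_cancel₀ hα0.ne',
        Real.rpow_one]
    have hABtpow : ((B - Bt) * R_0 / N_m) ^ (-α) = lamS * r^(-α) := by
      rw [hABt, Real.mul_rpow (Real.rpow_pos_of_pos hlamS _).le hr.le, hlpow]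
    have hkey := key_ineq α r d hα0 hα1 hr hd
    have hc : α * lamS * R_0 * C_U / (κ * N_f) = lamS * R_0 * (α * d) := by
      rw [hddef]; field_simp
    simp only [hφdef]
    rw [hc]
    have b3' : lamS * r^(-α) ≤ ((B - x) * R_0 / N_m) ^ (-α) := by rw [← hABtpow]; exact b3
    have p1 : lamS * R_0 * (((κ * lamS * x * R_0 + C_U) / (κ * N_f)) ^ (-α))
        ≤ lamS * R_0 * ((r+d)^(-α)) := by
      apply mul_le_mul_of_nonneg_left b1 (by positivity)
    have p2 : lamS * R_0 * (α * d) * (((κ * lamS * x * R_0 + C_U) / (κ * N_f)) ^ (-α-1))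
        ≤ lamS * R_0 * (α * d) * ((r+d)^(-α-1)) := by
      apply mul_le_mul_of_nonneg_left b2 (by positivity)
    have p3 : R_0 * (lamS * r^(-α)) ≤ R_0 * (((B - x) * R_0 / N_m) ^ (-α)) :=
      mul_le_mul_of_nonneg_left b3' hR0.le
    have p4 : lamS * R_0 * ((r+d)^(-α) + α*d*(r+d)^(-α-1)) < lamS * R_0 * (r^(-α)) :=
      mul_lt_mul_of_pos_left hkey (by positivity)
    linarith [p1, p2, p3, p4]
  -- main argument
  by_contra hcon
  push_neg at hcon
  rcases eq_or_lt_of_le hcon with heq | hlt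
  · have hBswB : Bsw < B := by rw [← heq]; exact hBtB
    have hBsw0 : 0 < Bsw := by rw [← heq]; exact hBt0
    have hBd := hderiv Bsw hmem.1 hBswB
    have hloc : IsLocalMax f Bsw := hmax.isLocalMax (Icc_mem_nhds hBsw0 hBswB)
    have h0 := hloc.hasDerivAt_eq_zero hBd
    have := hneg Bsw (le_of_eq heq) hBswB
    linarith
  · have hcont : ContinuousOn f (Icc Bt B) := by
      have cA : ContinuousOn (fun y => (B - y) * R_0 / N_m) (Icc Bt B) := by fun_prop
      have cR : ContinuousOn (fun y => (κ * lamS * y * R_0 + C_U) / (κ * N_f)) (Icc Bt B) := by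
        fun_prop
      have hRne : ∀ y ∈ Icc Bt B, (κ * lamS * y * R_0 + C_U) / (κ * N_f) ≠ 0 := by
        intro y hy
        have hy0 : 0 ≤ y := le_trans hBt0.le hy.1
        have : 0 < (κ * lamS * y * R_0 + C_U) / (κ * N_f) := by positivity
        exact this.ne'
      rw [hfdef]
      exact ((continuousOn_const.mul ((cA.rpow_const (fun x _ => Or.inr h1α.le)).div_const (1-α))).add
        (continuousOn_const.mul ((cR.rpow_const (fun x _ => Or.inr h1α.le)).div_const (1-α)))).sub
        (continuousOn_const.mul (cR.rpow_const fun x hx => Or.inl (hRne x hx)))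
    have hanti : StrictAntiOn f (Icc Bt B) := by
      apply strictAntiOn_of_deriv_neg (convex_Icc _ _) hcont
      intro x hx
      rw [interior_Icc] at hx
      rw [(hderiv x (le_trans hBt0.le hx.1.le) hx.2).deriv]
      exact hneg x hx.1.le hx.2
    have h1 := hanti (left_mem_Icc.mpr hBtB.le) ⟨hcon, hmem.2⟩ hlt
    have h2 := hmax (show Bt ∈ Icc (0:ℝ) B from ⟨hBt0.le, hBtB.le⟩)
    simp only [mem_setOf_eq] at h2
    linarith
end

section
/- Let α ∈ (0,1) and κ = α^{1/(1-α)}. Then for all b > 0 and C > 0: (κ^{α} + κ)·C·b^{α} + κ^{α+1}·b^{α+1} < (κ·b + C)^{α+1}, with equality when C = 0. -/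
open Real

/-- with `κ = α^(1/(1-α))`, for all `b > 0` and `C > 0`:
`(κ^α + κ)·C·b^α + κ^(α+1)·b^(α+1) < (κ·b + C)^(α+1)`, with equality when `C = 0`. -/
theorem stmt14 (α κ : ℝ) (hα0 : 0 < α) (hα1 : α < 1) (hκ : κ = α ^ (1 / (1 - α))) :
    (∀ b C : ℝ, 0 < b → 0 < C →
      (κ ^ α + κ) * C * b ^ α + κ ^ (α + 1) * b ^ (α + 1) < (κ * b + C) ^ (α + 1)) ∧
    (∀ b : ℝ, 0 < b →
      (κ ^ α + κ) * 0 * b ^ α + κ ^ (α + 1) * b ^ (α + 1) = (κ * b + 0) ^ (α + 1)) := by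
  have h1α : (0:ℝ) < 1 - α := by linarith
  have hκ0 : 0 < κ := by rw [hκ]; exact Real.rpow_pos_of_pos hα0 _
  have hκ1α : κ ^ (1 - α) = α := by
    rw [hκ, ← Real.rpow_mul hα0.le]
    rw [one_div_mul_cancel (by linarith : (1:ℝ) - α ≠ 0), Real.rpow_one]
  have hkey : κ = κ ^ α * α := by
    calc κ = κ ^ (α + (1 - α)) := by norm_num
    _ = κ ^ α * κ ^ (1 - α) := Real.rpow_add hκ0 _ _
    _ = κ ^ α * α := by rw [hκ1α]
  constructor
  · intro b C hb hC
    set x : ℝ := κ * b with hxdef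
    have hx : 0 < x := mul_pos hκ0 hb
    have hs : (0:ℝ) < C / x := div_pos hC hx
    have hbern := one_add_mul_self_lt_rpow_one_add (by linarith : (-1:ℝ) ≤ C / x)
      (ne_of_gt hs) (by linarith : (1:ℝ) < α + 1)
    -- multiply by x^(α+1)
    have hxp : (0:ℝ) < x ^ (α + 1) := Real.rpow_pos_of_pos hx _
    have h2 : (1 + (α + 1) * (C / x)) * x ^ (α + 1) < (1 + C / x) ^ (α + 1) * x ^ (α + 1) :=
      mul_lt_mul_of_pos_right hbern hxp
    have hrhs : (1 + C / x) ^ (α + 1) * x ^ (α + 1) = (x + C) ^ (α + 1) := by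
      rw [← Real.mul_rpow (by positivity) hx.le]
      congr 1
      field_simp
    have hxsplit : x ^ (α + 1) = x ^ α * x := by
      rw [Real.rpow_add hx, Real.rpow_one]
    have hlhs : (1 + (α + 1) * (C / x)) * x ^ (α + 1)
        = x ^ (α + 1) + (α + 1) * C * x ^ α := by
      rw [hxsplit]; field_simp
    rw [hrhs, hlhs] at h2
    have hxα : x ^ α = κ ^ α * b ^ α := Real.mul_rpow hκ0.le hb.le
    have hxα1 : x ^ (α + 1) = κ ^ (α + 1) * b ^ (α + 1) := Real.mul_rpow hκ0.le hb.le
    have hcoef : κ ^ α + κ = (α + 1) * κ ^ α := by nth_rewrite 2 [hkey]; ring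
    calc (κ ^ α + κ) * C * b ^ α + κ ^ (α + 1) * b ^ (α + 1)
        = x ^ (α + 1) + (α + 1) * C * x ^ α := by
          rw [hxα, hxα1, hcoef]; ring
      _ < (x + C) ^ (α + 1) := h2
  · intro b hb
    rw [add_zero, mul_zero, zero_mul, zero_add, Real.mul_rpow hκ0.le hb.le]
end

section
/- Let α ∈ (0,1), κ = α^{1/(1-α)}, let N ≥ 1 and B_1, …, B_N > 0 with T = B_1 + ⋯ + B_N and B_max = max_i B_i, and let R_0, λ_S, N_f, N_m, C_U > 0. Then the inequalities λ_S·(C_U/(κ·N_f))^{-α} ≤ (T·R_0/N_m)^{-α}·(1 − α·B_i/T) hold simultaneously for all i ∈ {1,…,N} if and only if C_U ≥ (R_0·T/(1 − α·B_max/T)^{1/α})·(κ·N_f·λ_S^{1/α}/N_m). (These inequalities are the first-order conditions for no SP to profit from moving bandwidth to small cells, so this is exactly the condition for a Macro-only Nash Equilibrium.) -/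
open Real

/-- the Macro-only Nash Equilibrium first-order conditions
`λ_S·(C_U/(κN_f))^(-α) ≤ (T·R_0/N_m)^(-α)·(1 − α·B_i/T)` hold for all SPs `i`
iff `C_U ≥ (R_0·T/(1 − α·B_max/T)^(1/α))·(κ·N_f·λ_S^(1/α)/N_m)`. -/
theorem stmt15 (α κ R_0 lamS N_f N_m C_U Bmax : ℝ) (N : ℕ) (hN : 1 ≤ N)
    (B : Fin N → ℝ) (hBpos : ∀ i, 0 < B i)
    (hα0 : 0 < α) (hα1 : α < 1) (hκ : κ = α ^ (1 / (1 - α)))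
    (hR0 : 0 < R_0) (hlamS : 0 < lamS) (hNf : 0 < N_f) (hNm : 0 < N_m) (hCU : 0 < C_U)
    (hBmax_ub : ∀ i, B i ≤ Bmax) (hBmax_mem : ∃ i, B i = Bmax) :
    (∀ i, lamS * (C_U / (κ * N_f)) ^ (-α)
        ≤ ((∑ j, B j) * R_0 / N_m) ^ (-α) * (1 - α * B i / (∑ j, B j)))
    ↔ R_0 * (∑ j, B j) / (1 - α * Bmax / (∑ j, B j)) ^ (1 / α)
        * (κ * N_f * lamS ^ (1 / α) / N_m) ≤ C_U := by
  obtain ⟨i₀, hi₀⟩ := hBmax_mem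
  set T : ℝ := ∑ j, B j with hTdef
  have hT : 0 < T := Finset.sum_pos (fun j _ => hBpos j) ⟨i₀, Finset.mem_univ i₀⟩
  have hBle : ∀ i, B i ≤ T := fun i =>
    Finset.single_le_sum (fun j _ => (hBpos j).le) (Finset.mem_univ i)
  have hBmaxT : Bmax ≤ T := hi₀ ▸ hBle i₀
  have hBmaxpos : 0 < Bmax := hi₀ ▸ hBpos i₀
  have hκpos : 0 < κ := hκ ▸ rpow_pos_of_pos hα0 _
  have hD : 0 < 1 - α * Bmax / T := by
    have h1 : α * Bmax / T ≤ α := by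
      rw [div_le_iff₀ hT]; nlinarith
    linarith
  have hP : 0 < T * R_0 / N_m := by positivity
  have hx : 0 < C_U / (κ * N_f) := by positivity
  -- Step 1: reduce to the worst SP
  have step1 : (∀ i, lamS * (C_U / (κ * N_f)) ^ (-α)
        ≤ (T * R_0 / N_m) ^ (-α) * (1 - α * B i / T))
      ↔ lamS * (C_U / (κ * N_f)) ^ (-α)
        ≤ (T * R_0 / N_m) ^ (-α) * (1 - α * Bmax / T) := by
    constructor
    · intro h
      have := h i₀
      rwa [hi₀] at this
    · intro h i
      refine h.trans (mul_le_mul_of_nonneg_left ?_ (rpow_pos_of_pos hP _).le)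
      have h2 : α * B i / T ≤ α * Bmax / T := by
        gcongr
        exact hBmax_ub i
      linarith
  rw [step1, one_div]
  -- Step 2: algebraic manipulation
  rw [Real.rpow_neg hx.le, Real.rpow_neg hP.le, ← div_eq_mul_inv, inv_mul_eq_div,
    div_le_div_iff₀ (rpow_pos_of_pos hx _) (rpow_pos_of_pos hP _),
    mul_comm (1 - α * Bmax / T), ← div_le_iff₀ hD,
    ← Real.rpow_inv_le_iff_of_pos (by positivity) hx.le hα0,
    Real.div_rpow (by positivity) hD.le,
    Real.mul_rpow hlamS.le (rpow_pos_of_pos hP _).le,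
    Real.rpow_rpow_inv hP.le hα0.ne',
    div_le_div_iff₀ (by positivity) (by positivity),
    div_mul_eq_mul_div, div_le_iff₀ (by positivity : (0:ℝ) < (1 - α * Bmax / T) ^ α⁻¹),
    show lamS ^ α⁻¹ * (T * R_0 / N_m) * (κ * N_f)
        = R_0 * T * (κ * N_f * lamS ^ α⁻¹ / N_m) from by field_simp]
end

section
/- Let α ∈ (0,1), κ = α^{1/(1-α)}, and let B, B_U, R_0, λ_S, λ_U, N_f, N_m > 0 satisfy B_U·λ_U < B·κ·N_f·λ_S^{1/α}/N_m. Then the limiting symmetric-equilibrium system — B_S + B_M = B, B_S > 0, B_M > 0, and (N_m/(B_M·R_0))^{α} = λ_S·(κ·N_f/((κ·B_S·λ_S + B_U·λ_U)·R_0))^{α} — has a unique solution, given by B_S = (B − B_U·λ_U·N_m/(κ·N_f·λ_S^{1/α}))/(1 + λ_S^{1−1/α}·N_m/N_f) and B_M = (B + B_U·λ_U/(κ·λ_S))·(λ_S^{1−1/α}·N_m/N_f)/(1 + λ_S^{1−1/α}·N_m/N_f). -/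
open Real

/-- under `B_U·λ_U < B·κ·N_f·λ_S^(1/α)/N_m`, the limiting
symmetric-equilibrium system has the unique solution
`B_S = (B − B_U·λ_U·N_m/(κ·N_f·λ_S^(1/α)))/(1 + λ_S^(1−1/α)·N_m/N_f)` and
`B_M = (B + B_U·λ_U/(κ·λ_S))·(λ_S^(1−1/α)·N_m/N_f)/(1 + λ_S^(1−1/α)·N_m/N_f)`. -/
theorem stmt16 (α κ B B_U R_0 lamS lamU N_f N_m : ℝ)
    (hα0 : 0 < α) (hα1 : α < 1) (hκ : κ = α ^ (1 / (1 - α)))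
    (hB : 0 < B) (hBU : 0 < B_U) (hR0 : 0 < R_0) (hlamS : 0 < lamS) (hlamU : 0 < lamU)
    (hNf : 0 < N_f) (hNm : 0 < N_m)
    (hcond : B_U * lamU < B * κ * N_f * lamS ^ (1 / α) / N_m) :
    ∀ B_S B_M : ℝ,
      (B_S + B_M = B ∧ 0 < B_S ∧ 0 < B_M ∧
        (N_m / (B_M * R_0)) ^ α
          = lamS * (κ * N_f / ((κ * B_S * lamS + B_U * lamU) * R_0)) ^ α)
      ↔ (B_S = (B - B_U * lamU * N_m / (κ * N_f * lamS ^ (1 / α)))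
            / (1 + lamS ^ (1 - 1 / α) * N_m / N_f) ∧
         B_M = (B + B_U * lamU / (κ * lamS)) * (lamS ^ (1 - 1 / α) * N_m / N_f)
            / (1 + lamS ^ (1 - 1 / α) * N_m / N_f)) := by
  intro B_S B_M
  have hα : α ≠ 0 := ne_of_gt hα0
  have hκpos : 0 < κ := hκ ▸ Real.rpow_pos_of_pos hα0 _
  set s := lamS ^ (1 / α) with hs_def
  have hs : 0 < s := Real.rpow_pos_of_pos hlamS _
  have hsα : s ^ α = lamS := by
    rw [hs_def, ← Real.rpow_mul hlamS.le, one_div, inv_mul_cancel₀ hα, Real.rpow_one]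
  have ht : lamS ^ (1 - 1 / α) = lamS / s := by
    rw [hs_def, Real.rpow_sub hlamS, Real.rpow_one]
  have hcond' : B_U * lamU * N_m < B * κ * N_f * s := (lt_div_iff₀ hNm).mp hcond
  have hden : 0 < 1 + lamS ^ (1 - 1 / α) * N_m / N_f := by positivity
  have hden' : 0 < 1 + lamS / s * N_m / N_f := ht ▸ hden
  have hsne := hs.ne'
  have hNfne := hNf.ne'
  have hκne := hκpos.ne'
  have hlamSne := hlamS.ne'
  constructor
  · rintro ⟨hsum, hBS, hBM, heq⟩
    have hD : 0 < κ * B_S * lamS + B_U * lamU := by positivity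
    have hr : lamS * (κ * N_f / ((κ * B_S * lamS + B_U * lamU) * R_0)) ^ α
        = (s * (κ * N_f / ((κ * B_S * lamS + B_U * lamU) * R_0))) ^ α := by
      rw [Real.mul_rpow hs.le (by positivity), hsα]
    rw [hr] at heq
    have hx : (0:ℝ) < N_m / (B_M * R_0) := by positivity
    have hy : (0:ℝ) < s * (κ * N_f / ((κ * B_S * lamS + B_U * lamU) * R_0)) := by positivity
    have h2 : N_m / (B_M * R_0) = s * (κ * N_f / ((κ * B_S * lamS + B_U * lamU) * R_0)) := by
      have := congrArg (fun z : ℝ => z ^ (1/α)) heq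
      simpa [← Real.rpow_mul hx.le, ← Real.rpow_mul hy.le, mul_one_div,
        mul_inv_cancel₀ hα, Real.rpow_one] using this
    have hlin : N_m * (κ * B_S * lamS + B_U * lamU) = s * κ * N_f * B_M := by
      rw [div_eq_iff (by positivity)] at h2
      have h3 : N_m = s * κ * N_f * B_M / (κ * B_S * lamS + B_U * lamU) := by
        rw [h2]; field_simp
      rw [h3]; field_simp
    rw [ht]
    constructor
    · rw [eq_div_iff hden'.ne']
      field_simp
      linear_combination (s*N_f*κ) * hsum + hlin
    · rw [eq_div_iff hden'.ne']
      field_simp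
      linear_combination (-1) * hlin + (κ*lamS*N_m) * hsum
  · rintro ⟨hS, hM⟩
    rw [ht] at hS hM
    have hBSpos : 0 < B_S := by
      rw [hS]
      apply div_pos _ hden'
      rw [sub_pos, div_lt_iff₀ (by positivity)]
      nlinarith
    have hBMpos : 0 < B_M := by rw [hM]; positivity
    have hsum : B_S + B_M = B := by
      rw [hS, hM, ← add_div, div_eq_iff hden'.ne']
      field_simp
      ring
    have hD : 0 < κ * B_S * lamS + B_U * lamU := by positivity
    have hlin : N_m * (κ * B_S * lamS + B_U * lamU) = s * κ * N_f * B_M := by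
      rw [hS, hM]
      field_simp
      ring
    have h2 : N_m / (B_M * R_0) = s * (κ * N_f / ((κ * B_S * lamS + B_U * lamU) * R_0)) := by
      rw [mul_div_assoc', div_eq_div_iff (by positivity) (by positivity)]
      linear_combination R_0 * hlin
    refine ⟨hsum, hBSpos, hBMpos, ?_⟩
    rw [h2, Real.mul_rpow hs.le (by positivity), hsα]
end

section
/- Let α ∈ (0,1) and B, R_0, N_m, N_f > 0 and λ_U > λ_S > 0. The function F(B_M, B_S, B_U) = N_m·u(B_M·R_0/N_m) + N_f·u((λ_S·B_S + λ_U·B_U)·R_0/N_f), maximized over B_M, B_S, B_U ≥ 0 with B_M + B_S + B_U = B, has the unique maximizer B_S = 0, B_M = N_m·B/(N_m + μ_U·N_f), B_U = μ_U·N_f·B/(N_m + μ_U·N_f), where μ_U = λ_U^{1/α − 1}. -/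
open Real

lemma st18_tangent {β s x : ℝ} (hβ0 : 0 < β) (hβ1 : β < 1) (hs : 0 < s) (hx : 0 ≤ x) :
    x ^ β ≤ s ^ β + β * s ^ (β - 1) * (x - s) := by
  have h := Real.geom_mean_le_arith_mean2_weighted hβ0.le (by linarith : (0:ℝ) ≤ 1 - β)
    (div_nonneg hx hs.le) zero_le_one (by ring)
  rw [Real.one_rpow, mul_one, mul_one] at h
  have hsβ : 0 < s ^ β := Real.rpow_pos_of_pos hs β
  rw [Real.div_rpow hx hs.le] at h
  rw [Real.rpow_sub hs, Real.rpow_one]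
  have h2 := mul_le_mul_of_nonneg_left h hsβ.le
  rw [mul_div_cancel₀ _ (ne_of_gt hsβ)] at h2
  calc x ^ β ≤ s ^ β * (β * (x / s) + (1 - β)) := h2
    _ = s ^ β + β * (s ^ β / s) * (x - s) := by field_simp; ring

lemma st18_key {β A C x y p q : ℝ} (hβ0 : 0 < β) (hβ1 : β < 1) (hA : 0 < A) (hC : 0 < C)
    (hx : 0 ≤ x) (hy : 0 ≤ y) (hp : 0 < p) (hq : 0 < q) (hsum : x + y ≤ p + q)
    (hslope : A * p ^ (β - 1) = C * q ^ (β - 1)) :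
    A * x ^ β + C * y ^ β ≤ A * p ^ β + C * q ^ β := by
  have h1 := st18_tangent hβ0 hβ1 hp hx
  have h2 := st18_tangent hβ0 hβ1 hq hy
  have e1 : A * x ^ β ≤ A * p ^ β + β * (A * p ^ (β - 1)) * (x - p) :=
    calc A * x ^ β ≤ A * (p ^ β + β * p ^ (β - 1) * (x - p)) :=
          mul_le_mul_of_nonneg_left h1 hA.le
      _ = A * p ^ β + β * (A * p ^ (β - 1)) * (x - p) := by ring
  have e2 : C * y ^ β ≤ C * q ^ β + β * (C * q ^ (β - 1)) * (y - q) :=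
    calc C * y ^ β ≤ C * (q ^ β + β * q ^ (β - 1) * (y - q)) :=
          mul_le_mul_of_nonneg_left h2 hC.le
      _ = C * q ^ β + β * (C * q ^ (β - 1)) * (y - q) := by ring
  rw [← hslope] at e2
  have e3 : β * (A * p ^ (β - 1)) * ((x - p) + (y - q)) ≤ 0 := by
    apply mul_nonpos_of_nonneg_of_nonpos (by positivity)
    linarith
  linarith [e1, e2, e3]

lemma st18_norm {N c R β : ℝ} (hN : 0 < N) (hc : 0 ≤ c) (hR : 0 ≤ R) :
    N * ((c * R / N) ^ β / β) = (N ^ (1 - β) * c ^ β) * (R ^ β / β) := by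
  rw [Real.div_rpow (by positivity) hN.le, Real.mul_rpow hc hR, Real.rpow_sub hN, Real.rpow_one]
  field_simp


set_option maxHeartbeats 2000000 in
/-- when `λ_U > λ_S`, the social-planner welfare
`F(B_M, B_S, B_U) = N_m·u(B_M·R_0/N_m) + N_f·u((λ_S·B_S + λ_U·B_U)·R_0/N_f)`,
maximized over nonnegative allocations summing to `B`, has the unique maximizer
`B_S = 0`, `B_M = N_m·B/(N_m + μ_U·N_f)`, `B_U = μ_U·N_f·B/(N_m + μ_U·N_f)`
with `μ_U = λ_U^(1/α − 1)`. -/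
theorem stmt18 (α B R_0 N_m N_f lamS lamU : ℝ)
    (hα0 : 0 < α) (hα1 : α < 1)
    (hB : 0 < B) (hR0 : 0 < R_0) (hNm : 0 < N_m) (hNf : 0 < N_f)
    (hlamS : 0 < lamS) (hlam : lamS < lamU) :
    ∀ bM bS bU : ℝ,
      (0 ≤ bM ∧ 0 ≤ bS ∧ 0 ≤ bU ∧ bM + bS + bU = B ∧
        ∀ cM cS cU : ℝ, 0 ≤ cM → 0 ≤ cS → 0 ≤ cU → cM + cS + cU = B →
          N_m * ((cM * R_0 / N_m) ^ (1 - α) / (1 - α))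
              + N_f * (((lamS * cS + lamU * cU) * R_0 / N_f) ^ (1 - α) / (1 - α))
            ≤ N_m * ((bM * R_0 / N_m) ^ (1 - α) / (1 - α))
              + N_f * (((lamS * bS + lamU * bU) * R_0 / N_f) ^ (1 - α) / (1 - α)))
      ↔ (bS = 0 ∧
         bM = N_m * B / (N_m + lamU ^ (1 / α - 1) * N_f) ∧
         bU = lamU ^ (1 / α - 1) * N_f * B / (N_m + lamU ^ (1 / α - 1) * N_f)) := by
  intro bM bS bU
  have hlamU : 0 < lamU := hlamS.trans hlam
  obtain ⟨β, hβdef⟩ : ∃ x : ℝ, x = 1 - α := ⟨_, rfl⟩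
  rw [← hβdef]
  have hβ0 : 0 < β := by rw [hβdef]; linarith
  have hβ1 : β < 1 := by rw [hβdef]; linarith
  have h1β : 1 - β = α := by rw [hβdef]; ring
  obtain ⟨μ, hμdef⟩ : ∃ x : ℝ, x = lamU ^ (1 / α - 1) := ⟨_, rfl⟩
  rw [← hμdef]
  have hμ : 0 < μ := by rw [hμdef]; exact Real.rpow_pos_of_pos hlamU _
  obtain ⟨D, hDdef⟩ : ∃ x : ℝ, x = N_m + μ * N_f := ⟨_, rfl⟩
  rw [← hDdef]
  have hD0 : 0 < D := by rw [hDdef]; positivity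
  obtain ⟨p, hpdef⟩ : ∃ x : ℝ, x = N_m * B / D := ⟨_, rfl⟩
  rw [← hpdef]
  obtain ⟨q, hqdef⟩ : ∃ x : ℝ, x = μ * N_f * B / D := ⟨_, rfl⟩
  rw [← hqdef]
  have hp0 : 0 < p := by rw [hpdef]; positivity
  have hq0 : 0 < q := by rw [hqdef]; positivity
  have hpq : p + q = B := by
    rw [hpdef, hqdef, hDdef]; field_simp
  have hμα : μ ^ α = lamU ^ β := by
    rw [hμdef, ← Real.rpow_mul hlamU.le]
    congr 1
    rw [hβdef]; field_simp
  have hA0 : (0:ℝ) < N_m ^ α := Real.rpow_pos_of_pos hNm _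
  have hC0 : (0:ℝ) < N_f ^ α * lamU ^ β := by positivity
  have hqd : q = μ * (N_f * B / D) := by rw [hqdef]; ring
  have hAq : N_m ^ α * q ^ α = (N_f ^ α * lamU ^ β) * p ^ α := by
    rw [hqd, Real.mul_rpow hμ.le (by positivity), hμα,
      show N_m ^ α * (lamU ^ β * (N_f * B / D) ^ α)
          = lamU ^ β * (N_m ^ α * (N_f * B / D) ^ α) from by ring,
      show N_f ^ α * lamU ^ β * p ^ α = lamU ^ β * (N_f ^ α * p ^ α) from by ring,
      ← Real.mul_rpow hNm.le (by positivity), ← Real.mul_rpow hNf.le hp0.le]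
    congr 2
    rw [hpdef]; ring
  have hslope : N_m ^ α * p ^ (β - 1) = (N_f ^ α * lamU ^ β) * q ^ (β - 1) := by
    have hb : β - 1 = -α := by rw [hβdef]; ring
    rw [hb, Real.rpow_neg hp0.le, Real.rpow_neg hq0.le]
    have hpα : (0:ℝ) < p ^ α := Real.rpow_pos_of_pos hp0 _
    have hqα : (0:ℝ) < q ^ α := Real.rpow_pos_of_pos hq0 _
    field_simp
    linear_combination hAq
  have hK : (0:ℝ) < R_0 ^ β / β := by positivity
  -- master inequality
  have hmain : ∀ cM cS cU : ℝ, 0 ≤ cM → 0 ≤ cS → 0 ≤ cU → cM + cS + cU = B →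
      N_m * ((cM * R_0 / N_m) ^ β / β)
          + N_f * (((lamS * cS + lamU * cU) * R_0 / N_f) ^ β / β)
        ≤ (N_m ^ α * p ^ β + (N_f ^ α * lamU ^ β) * q ^ β) * (R_0 ^ β / β) := by
    intro cM cS cU hcM hcS hcU hsum
    have ht : 0 ≤ lamS * cS + lamU * cU := by positivity
    set y := (lamS * cS + lamU * cU) / lamU with hy
    have hy0 : 0 ≤ y := by rw [hy]; positivity
    have hyt : lamS * cS + lamU * cU = lamU * y := by
      rw [hy]; field_simp
    have hxy : cM + y ≤ p + q := by
      rw [hpq, hy]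
      have h2 : (lamS * cS + lamU * cU) / lamU ≤ cS + cU := by
        rw [div_le_iff₀ hlamU]
        linarith [mul_le_mul_of_nonneg_right hlam.le hcS]
      linarith
    rw [st18_norm hNm hcM hR0.le, hyt, st18_norm hNf (by positivity) hR0.le,
      Real.mul_rpow hlamU.le hy0, h1β]
    have hkey := st18_key hβ0 hβ1 hA0 hC0 hcM hy0 hp0 hq0 hxy hslope
    calc N_m ^ α * cM ^ β * (R_0 ^ β / β) + N_f ^ α * (lamU ^ β * y ^ β) * (R_0 ^ β / β)
        = (N_m ^ α * cM ^ β + (N_f ^ α * lamU ^ β) * y ^ β) * (R_0 ^ β / β) := by ring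
      _ ≤ (N_m ^ α * p ^ β + (N_f ^ α * lamU ^ β) * q ^ β) * (R_0 ^ β / β) :=
          mul_le_mul_of_nonneg_right hkey hK.le
  -- value at the candidate
  have hcand : N_m * ((p * R_0 / N_m) ^ β / β)
      + N_f * (((lamS * 0 + lamU * q) * R_0 / N_f) ^ β / β)
      = (N_m ^ α * p ^ β + (N_f ^ α * lamU ^ β) * q ^ β) * (R_0 ^ β / β) := by
    rw [show lamS * 0 + lamU * q = lamU * q from by ring,
      st18_norm hNm hp0.le hR0.le, st18_norm hNf (by positivity) hR0.le,
      Real.mul_rpow hlamU.le hq0.le, h1β]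
    ring
  constructor
  · rintro ⟨hbM, hbS, hbU, hsum, hall⟩
    have hbS0 : bS = 0 := by
      by_contra h
      have hbSpos : 0 < bS := lt_of_le_of_ne hbS (Ne.symm h)
      have h1 := hall bM 0 (bS + bU) hbM le_rfl (by linarith) (by linarith)
      have ht2 : lamS * bS + lamU * bU < lamS * 0 + lamU * (bS + bU) := by
        have := mul_pos (sub_pos.2 hlam) hbSpos
        nlinarith [this]
      have hin : (lamS * bS + lamU * bU) * R_0 / N_f
          < (lamS * 0 + lamU * (bS + bU)) * R_0 / N_f :=
        div_lt_div_of_pos_right (mul_lt_mul_of_pos_right ht2 hR0) hNf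
      have hlt : ((lamS * bS + lamU * bU) * R_0 / N_f) ^ β
          < ((lamS * 0 + lamU * (bS + bU)) * R_0 / N_f) ^ β :=
        Real.rpow_lt_rpow (by positivity) hin hβ0
      have : N_f * (((lamS * bS + lamU * bU) * R_0 / N_f) ^ β / β)
          < N_f * (((lamS * 0 + lamU * (bS + bU)) * R_0 / N_f) ^ β / β) :=
        mul_lt_mul_of_pos_left (div_lt_div_of_pos_right hlt hβ0) hNf
      linarith
    subst hbS0
    have hbUB : bU = B - bM := by linarith
    have hup := hall p 0 q hp0.le le_rfl hq0.le (by linarith)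
    rw [hcand] at hup
    have hdown := hmain bM 0 bU hbM le_rfl hbU (by linarith)
    have heq : N_m * ((bM * R_0 / N_m) ^ β / β)
        + N_f * (((lamS * 0 + lamU * bU) * R_0 / N_f) ^ β / β)
        = (N_m ^ α * p ^ β + (N_f ^ α * lamU ^ β) * q ^ β) * (R_0 ^ β / β) :=
      le_antisymm hdown hup
    have hbMp : bM = p := by
      by_contra hne
      obtain ⟨m, hm⟩ : ∃ x : ℝ, x = (bM + p) / 2 := ⟨_, rfl⟩
      have hm0 : 0 ≤ m := by rw [hm]; linarith
      have hBm : 0 ≤ B - m := by rw [hm]; linarith [hpq, hbUB, hq0]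
      have hmfeas := hall m 0 (B - m) hm0 le_rfl hBm (by ring)
      have sc := Real.strictConcaveOn_rpow hβ0 hβ1
      have h1 := sc.2 (Set.mem_Ici.2 hbM) (Set.mem_Ici.2 hp0.le) hne
        (by norm_num : (0:ℝ) < 1/2) (by norm_num : (0:ℝ) < 1/2) (by norm_num)
      have hneU : bU ≠ q := by
        intro hcontra
        apply hne
        have : q = B - p := by linarith
        rw [hbUB, this] at hcontra
        linarith
      have h2 := sc.2 (Set.mem_Ici.2 hbU) (Set.mem_Ici.2 hq0.le) hneU
        (by norm_num : (0:ℝ) < 1/2) (by norm_num : (0:ℝ) < 1/2) (by norm_num)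
      simp only [smul_eq_mul] at h1 h2
      have hma : (1:ℝ)/2 * bM + 1/2 * p = m := by rw [hm]; ring
      have hmb : (1:ℝ)/2 * bU + 1/2 * q = B - m := by
        rw [hm, hbUB]
        have : q = B - p := by linarith
        rw [this]; ring
      rw [hma] at h1
      rw [hmb] at h2
      -- value at (m, 0, B-m)
      have hvm : N_m * ((m * R_0 / N_m) ^ β / β)
          + N_f * (((lamS * 0 + lamU * (B - m)) * R_0 / N_f) ^ β / β)
          = (N_m ^ α * m ^ β + (N_f ^ α * lamU ^ β) * (B - m) ^ β) * (R_0 ^ β / β) := by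
        rw [show lamS * 0 + lamU * (B - m) = lamU * (B - m) from by ring,
          st18_norm hNm hm0 hR0.le, st18_norm hNf (by positivity) hR0.le,
          Real.mul_rpow hlamU.le hBm, h1β]
        ring
      have hvb : N_m * ((bM * R_0 / N_m) ^ β / β)
          + N_f * (((lamS * 0 + lamU * bU) * R_0 / N_f) ^ β / β)
          = (N_m ^ α * bM ^ β + (N_f ^ α * lamU ^ β) * bU ^ β) * (R_0 ^ β / β) := by
        rw [show lamS * 0 + lamU * bU = lamU * bU from by ring,
          st18_norm hNm hbM hR0.le, st18_norm hNf (by positivity) hR0.le,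
          Real.mul_rpow hlamU.le hbU, h1β]
        ring
      rw [hvm, hvb] at hmfeas
      rw [hvb] at heq
      have hcoef : N_m ^ α * bM ^ β + (N_f ^ α * lamU ^ β) * bU ^ β
          = N_m ^ α * p ^ β + (N_f ^ α * lamU ^ β) * q ^ β :=
        mul_right_cancel₀ (ne_of_gt hK) heq
      have hstrict : N_m ^ α * bM ^ β + (N_f ^ α * lamU ^ β) * bU ^ β
          < N_m ^ α * m ^ β + (N_f ^ α * lamU ^ β) * (B - m) ^ β := by
        have e1 := mul_lt_mul_of_pos_left h1 hA0
        have e2 := mul_lt_mul_of_pos_left h2 hC0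
        linarith [e1, e2, hcoef]
      have := mul_lt_mul_of_pos_right hstrict hK
      linarith
    exact ⟨rfl, hbMp, by linarith⟩
  · rintro ⟨hbS0, hbMp, hbUq⟩
    subst hbS0 hbMp hbUq
    refine ⟨hp0.le, le_rfl, hq0.le, by linarith, ?_⟩
    intro cM cS cU h1 h2 h3 h4
    rw [hcand]
    exact hmain cM cS cU h1 h2 h3 h4
end

section
/- For every α ∈ (0,1): α^{α/(1−α)} + α ≤ 1 if and only if α ≤ 1/2, with equality if and only if α = 1/2. (In terms of κ = α^{1/(1-α)}, this says κ^{α} + α ≤ 1 exactly for α ∈ (0, 1/2], which is the condition under which a monopolist's market equilibrium with the welfare-optimal licensed/unlicensed split is a Macro-only equilibrium when λ_S = λ_U.) -/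
open Real

/-- Key lemma: for `0 < a < 1/2`, `a * log a < (1-a) * log (1-a)`. -/
lemma key_stmt19 (a : ℝ) (ha : 0 < a) (ha2 : a < 1/2) :
    a * Real.log a < (1 - a) * Real.log (1 - a) := by
  have hb : (0:ℝ) < 1 - a := by linarith
  rcases le_or_gt (Real.log a) (-1) with h | h
  · -- a ≤ 1/e case
    have h1 : a * Real.log a ≤ a * (-1) := mul_le_mul_of_nonneg_left h ha.le
    have hne : (1 - a)⁻¹ ≠ 1 := by
      intro hc
      have : (1 - a) = 1 := by
        field_simp at hc; linarith
      linarith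
    have h2 : Real.log ((1 - a)⁻¹) < (1 - a)⁻¹ - 1 :=
      Real.log_lt_sub_one_of_pos (by positivity) hne
    rw [Real.log_inv] at h2
    have h3 : (-Real.log (1 - a)) * (1 - a) < ((1 - a)⁻¹ - 1) * (1 - a) :=
      mul_lt_mul_of_pos_right h2 hb
    have h4 : ((1 - a)⁻¹ - 1) * (1 - a) = a := by field_simp; ring
    nlinarith
  · -- a > 1/e case
    have hne : a / (1 - a) ≠ 1 := by
      intro hc
      rw [div_eq_one_iff_eq hb.ne'] at hc
      linarith
    have h3 : Real.log (a / (1 - a)) < a / (1 - a) - 1 :=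
      Real.log_lt_sub_one_of_pos (by positivity) hne
    rw [Real.log_div ha.ne' hb.ne'] at h3
    have h4 : (Real.log a - Real.log (1 - a)) * (1 - a) < (a / (1 - a) - 1) * (1 - a) :=
      mul_lt_mul_of_pos_right h3 hb
    have h5 : (a / (1 - a) - 1) * (1 - a) = a - (1 - a) := by field_simp
    nlinarith [mul_pos (by linarith : (0:ℝ) < Real.log a + 1)
      (by linarith : (0:ℝ) < 1 - a - a)]

lemma lt_stmt19 (a : ℝ) (ha : 0 < a) (ha2 : a < 1/2) :
    a ^ (a / (1 - a)) < 1 - a := by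
  have hb : (0:ℝ) < 1 - a := by linarith
  have hkey := key_stmt19 a ha ha2
  have hlog : (a / (1 - a)) * Real.log a < Real.log (1 - a) := by
    rw [div_mul_eq_mul_div, div_lt_iff₀ hb]
    nlinarith
  calc a ^ (a / (1 - a)) = Real.exp ((a / (1 - a)) * Real.log a) := by
        rw [Real.rpow_def_of_pos ha, mul_comm]
    _ < Real.exp (Real.log (1 - a)) := Real.exp_lt_exp.mpr hlog
    _ = 1 - a := Real.exp_log hb

/-- for every α ∈ (0,1): `α^(α/(1−α)) + α ≤ 1` iff `α ≤ 1/2`,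
with equality iff `α = 1/2`. -/
theorem stmt19 (α : ℝ) (hα0 : 0 < α) (hα1 : α < 1) :
    (α ^ (α / (1 - α)) + α ≤ 1 ↔ α ≤ 1 / 2) ∧
    (α ^ (α / (1 - α)) + α = 1 ↔ α = 1 / 2) := by
  have hb : (0:ℝ) < 1 - α := by linarith
  rcases lt_trichotomy α (1/2) with hlt | heq | hgt
  · have h := lt_stmt19 α hα0 hlt
    constructor
    · constructor
      · intro _; linarith
      · intro _; linarith
    · constructor
      · intro hc; linarith
      · intro hc; linarith
  · subst heq
    have hx : ((1:ℝ)/2) / (1 - 1/2) = 1 := by norm_num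
    rw [hx, Real.rpow_one]
    norm_num
  · -- α > 1/2: apply key lemma to 1 - α
    have hkey := key_stmt19 (1 - α) hb (by linarith)
    have h1a : (1:ℝ) - (1 - α) = α := by ring
    rw [h1a] at hkey
    -- hkey : (1-α) * log (1-α) < α * log α
    have hlog : Real.log (1 - α) < (α / (1 - α)) * Real.log α := by
      rw [div_mul_eq_mul_div, lt_div_iff₀ hb]
      nlinarith
    have h : 1 - α < α ^ (α / (1 - α)) := by
      calc 1 - α = Real.exp (Real.log (1 - α)) := (Real.exp_log hb).symm
        _ < Real.exp ((α / (1 - α)) * Real.log α) := Real.exp_lt_exp.mpr hlog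
        _ = α ^ (α / (1 - α)) := by rw [Real.rpow_def_of_pos hα0, mul_comm]
    constructor
    · constructor
      · intro hc; linarith
      · intro hc; linarith
    · constructor
      · intro hc; linarith
      · intro hc; linarith
end
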